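/- arXiv:2008.13494 — 3 statements merged into one kernel-verified Lean document; each statement's English description precedes it below -/
import Mathlib

section
/- Let ℋ = (H; ·, ⊥) be a Hopf q-brace with bijective antipode S. Define h × k := (k·h_(1))h_(2). Then the identity map of H is invertible with respect to the convolution product built from the comultiplication of H^cop and the multiplication ×, and its inverse is the map T_×(h) := S(h_(1))·S^{-1}(h_(2)); that is, h_(2) × T_×(h_(1)) = T_×(h_(2)) × h_(1) = ε(h)1 for all h ∈ H. Moreover (k×l)·h = (k·h_(1)) × (l·h_(2)) for all h,k,l ∈ H. -/
open TensorProduct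

noncomputable section

variable (k : Type) [Field k] (X : Type) [AddCommGroup X] [Module k X] [Coalgebra k X]

/-- x ⊗ y ↦ ε(y) x -/
def cE : X ⊗[k] X →ₗ[k] X :=
  (TensorProduct.rid k X).toLinearMap ∘ₗ LinearMap.lTensor X (Coalgebra.counit (R := k))

/-- x ⊗ y ↦ ε(x) y -/
def cE' : X ⊗[k] X →ₗ[k] X :=
  (TensorProduct.lid k X).toLinearMap ∘ₗ LinearMap.rTensor X (Coalgebra.counit (R := k))

/-- first Sweedler component of a morphism `X⊗X → X⊗X` -/
def comp1 (s : X ⊗[k] X →ₗ[k] X ⊗[k] X) : X ⊗[k] X →ₗ[k] X := cE k X ∘ₗ s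

/-- second Sweedler component of a morphism `X⊗X → X⊗X` -/
def comp2 (s : X ⊗[k] X →ₗ[k] X ⊗[k] X) : X ⊗[k] X →ₗ[k] X := cE' k X ∘ₗ s

/-- `Gmap f (x ⊗ y) = f (x ⊗ y₍₁₎) ⊗ y₍₂₎` -/
def Gmap (f : X ⊗[k] X →ₗ[k] X) : X ⊗[k] X →ₗ[k] X ⊗[k] X :=
  TensorProduct.map f LinearMap.id ∘ₗ (TensorProduct.assoc k X X X).symm.toLinearMap ∘ₗ
    LinearMap.lTensor X (Coalgebra.comul (R := k))

/-- comultiplication of `X^cop` -/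
def comulCop : X →ₗ[k] X ⊗[k] X :=
  (TensorProduct.comm k X X).toLinearMap ∘ₗ Coalgebra.comul (R := k)

/-- `GmapCop f (x ⊗ y) = f (x ⊗ y₍₂₎) ⊗ y₍₁₎` -/
def GmapCop (f : X ⊗[k] X →ₗ[k] X) : X ⊗[k] X →ₗ[k] X ⊗[k] X :=
  TensorProduct.map f LinearMap.id ∘ₗ (TensorProduct.assoc k X X X).symm.toLinearMap ∘ₗ
    LinearMap.lTensor X (comulCop k X)

/-- comultiplication of `X ⊗ X` -/
def comulT : X ⊗[k] X →ₗ[k] (X ⊗[k] X) ⊗[k] (X ⊗[k] X) :=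
  (TensorProduct.tensorTensorTensorComm k X X X X).toLinearMap ∘ₗ
    TensorProduct.map (Coalgebra.comul (R := k)) (Coalgebra.comul (R := k))

/-- comultiplication of `X ⊗ X^cop` -/
def comulTCop : X ⊗[k] X →ₗ[k] (X ⊗[k] X) ⊗[k] (X ⊗[k] X) :=
  (TensorProduct.tensorTensorTensorComm k X X X X).toLinearMap ∘ₗ
    TensorProduct.map (Coalgebra.comul (R := k)) (comulCop k X)

/-- comultiplication of `X^cop ⊗ X^cop` -/
def comulTcc : X ⊗[k] X →ₗ[k] (X ⊗[k] X) ⊗[k] (X ⊗[k] X) :=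
  (TensorProduct.tensorTensorTensorComm k X X X X).toLinearMap ∘ₗ
    TensorProduct.map (comulCop k X) (comulCop k X)

/-- counit of `X ⊗ X` -/
def counitT : X ⊗[k] X →ₗ[k] k :=
  (TensorProduct.lid k k).toLinearMap ∘ₗ
    TensorProduct.map (Coalgebra.counit (R := k)) (Coalgebra.counit (R := k))

/-- `s : X⊗X → X⊗X` is a coalgebra morphism -/
def IsCoalgEndo (s : X ⊗[k] X →ₗ[k] X ⊗[k] X) : Prop :=
  comulT k X ∘ₗ s = TensorProduct.map s s ∘ₗ comulT k X ∧ counitT k X ∘ₗ s = counitT k X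

/-- `f : X⊗X → X` is a coalgebra morphism -/
def IsCoalgMor (f : X ⊗[k] X →ₗ[k] X) : Prop :=
  Coalgebra.comul (R := k) ∘ₗ f = TensorProduct.map f f ∘ₗ comulT k X ∧
  Coalgebra.counit (R := k) ∘ₗ f = counitT k X

/-- `f : X ⊗ X^cop → X` is a coalgebra morphism -/
def IsCoalgMorCop (f : X ⊗[k] X →ₗ[k] X) : Prop :=
  Coalgebra.comul (R := k) ∘ₗ f = TensorProduct.map f f ∘ₗ comulTCop k X ∧
  Coalgebra.counit (R := k) ∘ₗ f = counitT k X

/-- the operation `x ⊥ y := s₁ ((y·x₍₁₎) ⊗ x₍₂₎)` -/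
def dOf (s : X ⊗[k] X →ₗ[k] X ⊗[k] X) (p : X ⊗[k] X →ₗ[k] X) : X ⊗[k] X →ₗ[k] X :=
  comp1 k X s ∘ₗ Gmap k X p ∘ₗ (TensorProduct.comm k X X).toLinearMap

/-- the operation `⊥` of the endomorphism `s` viewed on `X^cop ⊗ X^cop` -/
def dOfCop (s : X ⊗[k] X →ₗ[k] X ⊗[k] X) (p : X ⊗[k] X →ₗ[k] X) : X ⊗[k] X →ₗ[k] X :=
  comp1 k X s ∘ₗ GmapCop k X p ∘ₗ (TensorProduct.comm k X X).toLinearMap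

/-- left non-degeneracy of `s` : `G_s` is invertible -/
def LeftNonDeg (s : X ⊗[k] X →ₗ[k] X ⊗[k] X) : Prop :=
  Function.Bijective (Gmap k X (comp2 k X s))

/-- `p` is the operation `·` associated with a left non-degenerate `s`, i.e.
`(x·y₍₁₎)^(y₍₂₎) = x^(y₍₁₎)·y₍₂₎ = ε(y)x`. -/
def IsDotOf (s : X ⊗[k] X →ₗ[k] X ⊗[k] X) (p : X ⊗[k] X →ₗ[k] X) : Prop :=
  comp2 k X s ∘ₗ Gmap k X p = cE k X ∧ p ∘ₗ Gmap k X (comp2 k X s) = cE k X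

def s12m (s : X ⊗[k] X →ₗ[k] X ⊗[k] X) : (X ⊗[k] X) ⊗[k] X →ₗ[k] (X ⊗[k] X) ⊗[k] X :=
  LinearMap.rTensor X s

def s23m (s : X ⊗[k] X →ₗ[k] X ⊗[k] X) : (X ⊗[k] X) ⊗[k] X →ₗ[k] (X ⊗[k] X) ⊗[k] X :=
  (TensorProduct.assoc k X X X).symm.toLinearMap ∘ₗ LinearMap.lTensor X s ∘ₗ
    (TensorProduct.assoc k X X X).toLinearMap

/-- the braid equation -/
def IsBraidSol (s : X ⊗[k] X →ₗ[k] X ⊗[k] X) : Prop :=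
  s12m k X s ∘ₗ s23m k X s ∘ₗ s12m k X s = s23m k X s ∘ₗ s12m k X s ∘ₗ s23m k X s

/-- the exchange identity `y₍₁₎⊥x₍₂₎ ⊗ x₍₁₎·y₍₂₎ = y₍₂₎⊥x₍₁₎ ⊗ x₍₂₎·y₍₁₎` -/
def ExchangeId (p d : X ⊗[k] X →ₗ[k] X) : Prop :=
  ∀ (x y : X) (n m : ℕ) (x1 x2 : Fin n → X) (y1 y2 : Fin m → X),
    (∑ i, x1 i ⊗ₜ[k] x2 i) = Coalgebra.comul (R := k) x →
    (∑ j, y1 j ⊗ₜ[k] y2 j) = Coalgebra.comul (R := k) y →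
    (∑ i, ∑ j, d (y1 j ⊗ₜ[k] x2 i) ⊗ₜ[k] p (x1 i ⊗ₜ[k] y2 j)) =
      ∑ i, ∑ j, d (y2 j ⊗ₜ[k] x1 i) ⊗ₜ[k] p (x2 i ⊗ₜ[k] y1 j)

/-- the three q-cycle coalgebra conditions -/
def QCycleConds (p d : X ⊗[k] X →ₗ[k] X) : Prop :=
  ∀ (x y z : X) (n m : ℕ) (y1 y2 : Fin n → X) (z1 z2 : Fin m → X),
    (∑ i, y1 i ⊗ₜ[k] y2 i) = Coalgebra.comul (R := k) y →
    (∑ j, z1 j ⊗ₜ[k] z2 j) = Coalgebra.comul (R := k) z →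
    ((∑ i, p (p (x ⊗ₜ[k] y1 i) ⊗ₜ[k] d (z ⊗ₜ[k] y2 i))) =
        ∑ j, p (p (x ⊗ₜ[k] z2 j) ⊗ₜ[k] p (y ⊗ₜ[k] z1 j)) ∧
     (∑ i, d (p (x ⊗ₜ[k] y1 i) ⊗ₜ[k] p (z ⊗ₜ[k] y2 i))) =
        ∑ j, p (d (x ⊗ₜ[k] z2 j) ⊗ₜ[k] d (y ⊗ₜ[k] z1 j)) ∧
     (∑ i, d (d (x ⊗ₜ[k] y1 i) ⊗ₜ[k] d (z ⊗ₜ[k] y2 i))) =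
        ∑ j, d (d (x ⊗ₜ[k] z2 j) ⊗ₜ[k] p (y ⊗ₜ[k] z1 j)))


/-- the left action `ˣy := y₍₂₎ ⊥ x^(y₍₁₎)`, where `g` is the operation `x^y` -/
def bOf (g d : X ⊗[k] X →ₗ[k] X) : X ⊗[k] X →ₗ[k] X :=
  d ∘ₗ (TensorProduct.comm k X X).toLinearMap ∘ₗ Gmap k X g

/-- the left action `_xy := y₍₁₎ · x_(y₍₂₎)`, where `g'` is the operation `x_y` -/
def uOfCop (g' p : X ⊗[k] X →ₗ[k] X) : X ⊗[k] X →ₗ[k] X :=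
  p ∘ₗ (TensorProduct.comm k X X).toLinearMap ∘ₗ GmapCop k X g'

/-- `Hmap f (x ⊗ y) = f (y₍₂₎ ⊗ x) ⊗ y₍₁₎` -/
def Hmap (f : X ⊗[k] X →ₗ[k] X) : X ⊗[k] X →ₗ[k] X ⊗[k] X :=
  TensorProduct.map f LinearMap.id ∘ₗ (TensorProduct.assoc k X X X).symm.toLinearMap ∘ₗ
    LinearMap.lTensor X (TensorProduct.comm k X X).toLinearMap ∘ₗ
    (TensorProduct.assoc k X X X).toLinearMap ∘ₗ
    LinearMap.rTensor X (comulCop k X) ∘ₗ (TensorProduct.comm k X X).toLinearMap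

/-- `HmapCop f (x ⊗ y) = f (y₍₁₎ ⊗ x) ⊗ y₍₂₎` -/
def HmapCop (f : X ⊗[k] X →ₗ[k] X) : X ⊗[k] X →ₗ[k] X ⊗[k] X :=
  TensorProduct.map f LinearMap.id ∘ₗ (TensorProduct.assoc k X X X).symm.toLinearMap ∘ₗ
    LinearMap.lTensor X (TensorProduct.comm k X X).toLinearMap ∘ₗ
    (TensorProduct.assoc k X X X).toLinearMap ∘ₗ
    LinearMap.rTensor X (Coalgebra.comul (R := k)) ∘ₗ (TensorProduct.comm k X X).toLinearMap

variable (H : Type) [Ring H] [HopfAlgebra k H]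

/-- `(H, ·)` is a right module over `H^op`: `h·1 = h` and `h·(ab) = (h·b)·a` -/
def RightOpModule (p : H ⊗[k] H →ₗ[k] H) : Prop :=
  (∀ h : H, p (h ⊗ₜ[k] (1 : H)) = h) ∧
  ∀ h a b : H, p (h ⊗ₜ[k] (a * b)) = p (p (h ⊗ₜ[k] b) ⊗ₜ[k] a)

/-- the Hopf q-brace distributivity laws -/
def QBraceDistrib (p d : H ⊗[k] H →ₗ[k] H) : Prop :=
  ∀ (h kk l : H) (n m : ℕ) (l1 l2 : Fin n → H) (k1 k2 : Fin m → H),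
    (∑ i, l1 i ⊗ₜ[k] l2 i) = Coalgebra.comul (R := k) l →
    (∑ j, k1 j ⊗ₜ[k] k2 j) = Coalgebra.comul (R := k) kk →
    (p ((h * kk) ⊗ₜ[k] l) =
        ∑ i, ∑ j, p (h ⊗ₜ[k] d (l1 i ⊗ₜ[k] k2 j)) * p (k1 j ⊗ₜ[k] l2 i)) ∧
    (d ((h * kk) ⊗ₜ[k] l) =
        ∑ i, ∑ j, d (h ⊗ₜ[k] p (l1 i ⊗ₜ[k] k2 j)) * d (k1 j ⊗ₜ[k] l2 i))

/-- A Hopf q-brace: a regular q-cycle coalgebra on a Hopf algebra with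
right `H^op`-module structures and the distributivity laws -/
def IsHopfQBrace (p d : H ⊗[k] H →ₗ[k] H) : Prop :=
  IsCoalgMorCop k H p ∧ IsCoalgMorCop k H d ∧ ExchangeId k H p d ∧
  Function.Bijective (Gmap k H p) ∧ Function.Bijective (GmapCop k H d) ∧
  QCycleConds k H p d ∧ RightOpModule k H p ∧ RightOpModule k H d ∧ QBraceDistrib k H p d

/-- the Hopf skew-brace condition `(k⊥h₍₂₎)h₍₁₎ = (h·k₍₁₎)k₍₂₎` -/
def SkewCond (p d : H ⊗[k] H →ₗ[k] H) : Prop :=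
  ∀ (h kk : H) (n m : ℕ) (h1 h2 : Fin n → H) (k1 k2 : Fin m → H),
    (∑ i, h1 i ⊗ₜ[k] h2 i) = Coalgebra.comul (R := k) h →
    (∑ j, k1 j ⊗ₜ[k] k2 j) = Coalgebra.comul (R := k) kk →
    (∑ i, d (kk ⊗ₜ[k] h2 i) * h1 i) = ∑ j, p (h ⊗ₜ[k] k1 j) * k2 j

def IsHopfSkewBrace (p d : H ⊗[k] H →ₗ[k] H) : Prop :=
  IsHopfQBrace k H p d ∧ SkewCond k H p d

/-- weak braiding operator conditions -/
def IsWeakBraidingOp (s : H ⊗[k] H →ₗ[k] H ⊗[k] H) : Prop :=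
  (s ∘ₗ LinearMap.rTensor H (LinearMap.mul' k H) =
    LinearMap.lTensor H (LinearMap.mul' k H) ∘ₗ (TensorProduct.assoc k H H H).toLinearMap ∘ₗ
      LinearMap.rTensor H s ∘ₗ (TensorProduct.assoc k H H H).symm.toLinearMap ∘ₗ
      LinearMap.lTensor H s ∘ₗ (TensorProduct.assoc k H H H).toLinearMap) ∧
  (s ∘ₗ LinearMap.lTensor H (LinearMap.mul' k H) =
    LinearMap.rTensor H (LinearMap.mul' k H) ∘ₗ (TensorProduct.assoc k H H H).symm.toLinearMap ∘ₗ
      LinearMap.lTensor H s ∘ₗ (TensorProduct.assoc k H H H).toLinearMap ∘ₗ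
      LinearMap.rTensor H s ∘ₗ (TensorProduct.assoc k H H H).symm.toLinearMap) ∧
  (∀ h : H, s ((1 : H) ⊗ₜ[k] h) = h ⊗ₜ[k] (1 : H)) ∧
  (∀ h : H, s (h ⊗ₜ[k] (1 : H)) = (1 : H) ⊗ₜ[k] h)

/-- `(H, H, α, β)` is a matched pair of bialgebras -/
def IsMatchedPairSelf (α β : H ⊗[k] H →ₗ[k] H) : Prop :=
  ((∀ l : H, α (l ⊗ₜ[k] (1 : H)) = l) ∧
   (∀ l a b : H, α (l ⊗ₜ[k] (a * b)) = α (α (l ⊗ₜ[k] a) ⊗ₜ[k] b))) ∧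
  IsCoalgMor k H α ∧
  ((∀ h : H, β ((1 : H) ⊗ₜ[k] h) = h) ∧
   (∀ a b h : H, β ((a * b) ⊗ₜ[k] h) = β (a ⊗ₜ[k] β (b ⊗ₜ[k] h)))) ∧
  IsCoalgMor k H β ∧
  (∀ (l h h' : H) (n m : ℕ) (l1 l2 : Fin n → H) (h1 h2 : Fin m → H),
     (∑ i, l1 i ⊗ₜ[k] l2 i) = Coalgebra.comul (R := k) l →
     (∑ j, h1 j ⊗ₜ[k] h2 j) = Coalgebra.comul (R := k) h →
     β (l ⊗ₜ[k] (h * h')) =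
       ∑ i, ∑ j, β (l1 i ⊗ₜ[k] h1 j) * β (α (l2 i ⊗ₜ[k] h2 j) ⊗ₜ[k] h')) ∧
  (∀ (l' l h : H) (n m : ℕ) (l1 l2 : Fin n → H) (h1 h2 : Fin m → H),
     (∑ i, l1 i ⊗ₜ[k] l2 i) = Coalgebra.comul (R := k) l →
     (∑ j, h1 j ⊗ₜ[k] h2 j) = Coalgebra.comul (R := k) h →
     α ((l' * l) ⊗ₜ[k] h) =
       ∑ i, ∑ j, α (l' ⊗ₜ[k] β (l1 i ⊗ₜ[k] h1 j)) * α (l2 i ⊗ₜ[k] h2 j)) ∧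
  (∀ h : H, α ((1 : H) ⊗ₜ[k] h) = Coalgebra.counit (R := k) h • (1 : H)) ∧
  (∀ l : H, β (l ⊗ₜ[k] (1 : H)) = Coalgebra.counit (R := k) l • (1 : H)) ∧
  (∀ (l h : H) (n m : ℕ) (l1 l2 : Fin n → H) (h1 h2 : Fin m → H),
     (∑ i, l1 i ⊗ₜ[k] l2 i) = Coalgebra.comul (R := k) l →
     (∑ j, h1 j ⊗ₜ[k] h2 j) = Coalgebra.comul (R := k) h →
     (∑ i, ∑ j, β (l1 i ⊗ₜ[k] h1 j) ⊗ₜ[k] α (l2 i ⊗ₜ[k] h2 j)) =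
       ∑ i, ∑ j, β (l2 i ⊗ₜ[k] h2 j) ⊗ₜ[k] α (l1 i ⊗ₜ[k] h1 j))

/-- the operation `h × kk := (kk·h₍₁₎)h₍₂₎` -/
def tmOp (p : H ⊗[k] H →ₗ[k] H) : H ⊗[k] H →ₗ[k] H :=
  LinearMap.mul' k H ∘ₗ Gmap k H p ∘ₗ (TensorProduct.comm k H H).toLinearMap

/-- the map `T_× (h) := S(h₍₁₎) · S⁻¹(h₍₂₎)` -/
def TOp (p : H ⊗[k] H →ₗ[k] H) (Sinv : H →ₗ[k] H) : H →ₗ[k] H :=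
  p ∘ₗ TensorProduct.map (HopfAlgebra.antipode (R := k) (A := H)) Sinv ∘ₗ
    Coalgebra.comul (R := k)

namespace Stmt14Aux

variable {k : Type} [Field k] {H : Type} [Ring H] [HopfAlgebra k H]

/-- Fin-indexed representation of the comultiplication of `a`. -/
structure FinRep (k : Type) [Field k] {H : Type} [AddCommGroup H] [Module k H]
    [Coalgebra k H] (a : H) where
  n : ℕ
  l : Fin n → H
  r : Fin n → H
  eq : ∑ i, l i ⊗ₜ[k] r i = Coalgebra.comul (R := k) a

lemma exists_fin {M N : Type} [AddCommGroup M] [AddCommGroup N] [Module k M] [Module k N]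
    (x : M ⊗[k] N) : ∃ (n : ℕ) (f : Fin n → M) (g : Fin n → N), ∑ i, f i ⊗ₜ[k] g i = x := by
  obtain ⟨s, hs⟩ := TensorProduct.exists_finset (R := k) x
  refine ⟨s.card, fun i => ((s.equivFin.symm i : M × N)).1,
    fun i => ((s.equivFin.symm i : M × N)).2, ?_⟩
  rw [hs, ← Finset.sum_coe_sort s (fun x => x.1 ⊗ₜ[k] x.2)]
  exact Equiv.sum_comp s.equivFin.symm (fun x : s => (x : M × N).1 ⊗ₜ[k] (x : M × N).2)

/-- choose a Fin-indexed representation -/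
def finRep (a : H) : FinRep k a :=
  ⟨(exists_fin (Coalgebra.comul (R := k) a)).choose,
   (exists_fin (Coalgebra.comul (R := k) a)).choose_spec.choose,
   (exists_fin (Coalgebra.comul (R := k) a)).choose_spec.choose_spec.choose,
   (exists_fin (Coalgebra.comul (R := k) a)).choose_spec.choose_spec.choose_spec⟩

def FinRep.toRepr {a : H} (ρ : FinRep k a) : Coalgebra.Repr k a (Fin ρ.n) where
  index := (Finset.univ : Finset (Fin ρ.n))
  left := ρ.l
  right := ρ.r
  eq := ρ.eq

lemma FinRep.comul_eq {a : H} (ρ : FinRep k a) :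
    Coalgebra.comul (R := k) a = ∑ i, ρ.l i ⊗ₜ[k] ρ.r i := ρ.eq.symm

lemma FinRep.sum_counit_smul_left {a : H} (ρ : FinRep k a) :
    ∑ i, Coalgebra.counit (R := k) (ρ.l i) • ρ.r i = a := by
  have h := Coalgebra.sum_counit_tmul_eq ρ.toRepr
  apply_fun (TensorProduct.lid k H) at h
  simpa [FinRep.toRepr, map_sum] using h

lemma FinRep.sum_counit_smul_right {a : H} (ρ : FinRep k a) :
    ∑ i, Coalgebra.counit (R := k) (ρ.r i) • ρ.l i = a := by
  have h := Coalgebra.sum_tmul_counit_eq ρ.toRepr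
  apply_fun (TensorProduct.rid k H) at h
  simpa [FinRep.toRepr, map_sum] using h

lemma FinRep.antipode_mul {a : H} (ρ : FinRep k a) :
    ∑ i, HopfAlgebra.antipode (R := k) (ρ.l i) * ρ.r i = algebraMap k H (Coalgebra.counit a) := by
  simpa [FinRep.toRepr] using HopfAlgebra.sum_antipode_mul_eq_algebraMap_counit ρ.toRepr

lemma FinRep.mul_antipode {a : H} (ρ : FinRep k a) :
    ∑ i, ρ.l i * HopfAlgebra.antipode (R := k) (ρ.r i) = algebraMap k H (Coalgebra.counit a) := by
  simpa [FinRep.toRepr] using HopfAlgebra.sum_mul_antipode_eq_algebraMap_counit ρ.toRepr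


section Coassoc

open LinearMap

/-- iterated comultiplication, three legs, right nested -/
def D3 (k : Type) [Field k] (H : Type) [Ring H] [HopfAlgebra k H] :
    H →ₗ[k] H ⊗[k] (H ⊗[k] H) :=
  lTensor H (Coalgebra.comul (R := k)) ∘ₗ Coalgebra.comul (R := k)

/-- iterated comultiplication, four legs, right nested -/
def D4 (k : Type) [Field k] (H : Type) [Ring H] [HopfAlgebra k H] :
    H →ₗ[k] H ⊗[k] (H ⊗[k] (H ⊗[k] H)) :=
  lTensor H (lTensor H (Coalgebra.comul (R := k))) ∘ₗ D3 k H

lemma nm1 : (TensorProduct.assoc k H H (H ⊗[k] H)).toLinearMap ∘ₗ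
      lTensor (H ⊗[k] H) (Coalgebra.comul (R := k)) =
    lTensor H (lTensor H (Coalgebra.comul (R := k))) ∘ₗ
      (TensorProduct.assoc k H H H).toLinearMap := by
  apply TensorProduct.ext_threefold
  intro x y z
  simp

lemma nm2 : (TensorProduct.assoc k H (H ⊗[k] H) H).toLinearMap ∘ₗ
      rTensor H (lTensor H (Coalgebra.comul (R := k))) =
    lTensor H (rTensor H (Coalgebra.comul (R := k))) ∘ₗ
      (TensorProduct.assoc k H H H).toLinearMap := by
  apply TensorProduct.ext_threefold
  intro x y z
  simp

lemma nm1' {W : Type} [AddCommGroup W] [Module k W]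
    (F : W →ₗ[k] (H ⊗[k] H) ⊗[k] H) :
    (TensorProduct.assoc k H H (H ⊗[k] H)).toLinearMap ∘ₗ
      (lTensor (H ⊗[k] H) (Coalgebra.comul (R := k)) ∘ₗ F) =
    lTensor H (lTensor H (Coalgebra.comul (R := k))) ∘ₗ
      ((TensorProduct.assoc k H H H).toLinearMap ∘ₗ F) := by
  simp only [← LinearMap.comp_assoc, nm1]

lemma nm2' {W : Type} [AddCommGroup W] [Module k W]
    (F : W →ₗ[k] (H ⊗[k] H) ⊗[k] H) :
    (TensorProduct.assoc k H (H ⊗[k] H) H).toLinearMap ∘ₗ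
      (rTensor H (lTensor H (Coalgebra.comul (R := k))) ∘ₗ F) =
    lTensor H (rTensor H (Coalgebra.comul (R := k))) ∘ₗ
      ((TensorProduct.assoc k H H H).toLinearMap ∘ₗ F) := by
  simp only [← LinearMap.comp_assoc, nm2]

lemma lT2' {W W1 W2 W3 : Type} [AddCommGroup W] [Module k W]
    [AddCommGroup W1] [Module k W1] [AddCommGroup W2] [Module k W2]
    [AddCommGroup W3] [Module k W3]
    (f : W2 →ₗ[k] W3) (g : W1 →ₗ[k] W2) (F : W →ₗ[k] H ⊗[k] W1) :
    lTensor H f ∘ₗ (lTensor H g ∘ₗ F) = lTensor H (f ∘ₗ g) ∘ₗ F := by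
  simp only [← LinearMap.comp_assoc, lTensor_comp]

lemma mD3 : D3 k H = (TensorProduct.assoc k H H H).toLinearMap ∘ₗ
    rTensor H (Coalgebra.comul (R := k)) ∘ₗ Coalgebra.comul (R := k) := by
  rw [D3]; exact Coalgebra.coassoc.symm

lemma mD4a : D4 k H = lTensor H (D3 k H) ∘ₗ Coalgebra.comul (R := k) := by
  rw [D4, D3, lT2']

lemma mD4b : D4 k H = (TensorProduct.assoc k H H (H ⊗[k] H)).toLinearMap ∘ₗ
    TensorProduct.map (Coalgebra.comul (R := k)) (Coalgebra.comul (R := k)) ∘ₗ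
    Coalgebra.comul (R := k) := by
  rw [← lTensor_comp_rTensor]
  simp only [LinearMap.comp_assoc]
  rw [nm1', Coalgebra.coassoc, D4, D3]

lemma mD4c : D4 k H = lTensor H (TensorProduct.assoc k H H H).toLinearMap ∘ₗ
    (TensorProduct.assoc k H (H ⊗[k] H) H).toLinearMap ∘ₗ
    rTensor H (D3 k H) ∘ₗ Coalgebra.comul (R := k) := by
  rw [show rTensor H (D3 k H) = rTensor H (lTensor H (Coalgebra.comul (R := k))) ∘ₗ
      rTensor H (Coalgebra.comul (R := k)) from by rw [D3, rTensor_comp]]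
  simp only [LinearMap.comp_assoc]
  rw [nm2', Coalgebra.coassoc, lT2', lT2', LinearMap.comp_assoc, ← mD3, ← mD4a]

lemma eD3 {a : H} (ρ : FinRep k a) (ρb : ∀ i, FinRep k (ρ.r i)) :
    D3 k H a = ∑ i, ∑ j, ρ.l i ⊗ₜ[k] ((ρb i).l j ⊗ₜ[k] (ρb i).r j) := by
  rw [D3, LinearMap.comp_apply, ρ.comul_eq, map_sum]
  exact Finset.sum_congr rfl fun i _ => by
    rw [lTensor_tmul, (ρb i).comul_eq, tmul_sum]

lemma eRN {a : H} (ρ : FinRep k a) (ρb : ∀ i, FinRep k (ρ.r i))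
    (ρe : ∀ i j, FinRep k ((ρb i).r j)) :
    ∑ i, ∑ j, ∑ m, ρ.l i ⊗ₜ[k] ((ρb i).l j ⊗ₜ[k] ((ρe i j).l m ⊗ₜ[k] (ρe i j).r m)) =
      D4 k H a := by
  rw [D4, LinearMap.comp_apply, eD3 ρ ρb, map_sum]
  refine Finset.sum_congr rfl fun i _ => ?_
  rw [map_sum]
  refine Finset.sum_congr rfl fun j _ => ?_
  rw [lTensor_tmul, lTensor_tmul, (ρe i j).comul_eq, tmul_sum, tmul_sum]

lemma eTA {a : H} (ρ : FinRep k a) (ρa : ∀ i, FinRep k (ρ.l i))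
    (ρb : ∀ i, FinRep k (ρ.r i)) :
    ∑ i, ∑ j, ∑ m,
        (ρa i).l j ⊗ₜ[k] ((ρa i).r j ⊗ₜ[k] ((ρb i).l m ⊗ₜ[k] (ρb i).r m)) =
      D4 k H a := by
  rw [mD4b, LinearMap.comp_apply, LinearMap.comp_apply, ρ.comul_eq, map_sum, map_sum]
  refine Finset.sum_congr rfl fun i _ => ?_
  rw [TensorProduct.map_tmul, (ρa i).comul_eq, (ρb i).comul_eq, TensorProduct.sum_tmul,
    map_sum]
  refine Finset.sum_congr rfl fun j _ => ?_
  rw [TensorProduct.tmul_sum, map_sum]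
  exact Finset.sum_congr rfl fun m _ => by simp

lemma eTB {a : H} (ρ : FinRep k a) (ρb : ∀ i, FinRep k (ρ.r i))
    (ρM : ∀ i j, FinRep k ((ρb i).l j)) :
    ∑ i, ∑ j, ∑ m,
        ρ.l i ⊗ₜ[k] ((ρM i j).l m ⊗ₜ[k] ((ρM i j).r m ⊗ₜ[k] (ρb i).r j)) =
      D4 k H a := by
  rw [mD4a, LinearMap.comp_apply, ρ.comul_eq, map_sum]
  refine Finset.sum_congr rfl fun i _ => ?_
  rw [lTensor_tmul, mD3, LinearMap.comp_apply, LinearMap.comp_apply, (ρb i).comul_eq,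
    map_sum, map_sum, tmul_sum]
  refine Finset.sum_congr rfl fun j _ => ?_
  rw [rTensor_tmul, (ρM i j).comul_eq, TensorProduct.sum_tmul, map_sum, tmul_sum]
  exact Finset.sum_congr rfl fun m _ => by simp

lemma eTC {a : H} (ρ : FinRep k a) (ρa : ∀ i, FinRep k (ρ.l i))
    (ρδ : ∀ i j, FinRep k ((ρa i).r j)) :
    ∑ i, ∑ j, ∑ m,
        (ρa i).l j ⊗ₜ[k] ((ρδ i j).l m ⊗ₜ[k] ((ρδ i j).r m ⊗ₜ[k] ρ.r i)) =
      D4 k H a := by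
  rw [mD4c]
  simp only [LinearMap.comp_apply]
  rw [ρ.comul_eq, map_sum, map_sum, map_sum]
  refine Finset.sum_congr rfl fun i _ => ?_
  rw [rTensor_tmul, D3, LinearMap.comp_apply, (ρa i).comul_eq, map_sum,
    TensorProduct.sum_tmul, map_sum, map_sum]
  refine Finset.sum_congr rfl fun j _ => ?_
  rw [lTensor_tmul, (ρδ i j).comul_eq, tmul_sum, TensorProduct.sum_tmul, map_sum, map_sum]
  refine Finset.sum_congr rfl fun m _ => ?_
  simp

/-- three-leg coassociativity for chosen representations -/
lemma e3 {a : H} (ρ : FinRep k a) (ρa : ∀ i, FinRep k (ρ.l i))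
    (ρb : ∀ i, FinRep k (ρ.r i)) :
    ∑ i, ∑ j, (ρa i).l j ⊗ₜ[k] ((ρa i).r j ⊗ₜ[k] ρ.r i) =
      ∑ i, ∑ j, ρ.l i ⊗ₜ[k] ((ρb i).l j ⊗ₜ[k] (ρb i).r j) := by
  have h := Coalgebra.sum_tmul_tmul_eq ρ.toRepr (fun i => (ρa i).toRepr)
    (fun i => (ρb i).toRepr)
  simpa [FinRep.toRepr] using h

lemma e3' {a : H} {n : ℕ} {f g : Fin n → H}
    (hfg : ∑ i, f i ⊗ₜ[k] g i = Coalgebra.comul (R := k) a)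
    (ρa : ∀ i, FinRep k (f i)) (ρb : ∀ i, FinRep k (g i)) :
    ∑ i, ∑ j, (ρa i).l j ⊗ₜ[k] ((ρa i).r j ⊗ₜ[k] g i) =
      ∑ i, ∑ j, f i ⊗ₜ[k] ((ρb i).l j ⊗ₜ[k] (ρb i).r j) :=
  e3 ⟨n, f, g, hfg⟩ ρa ρb

end Coassoc


section Conv

variable {A : Type} [Ring A] [Algebra k A]

/-- convolution product -/
def cv (f g : H →ₗ[k] A) : H →ₗ[k] A :=
  LinearMap.mul' k A ∘ₗ TensorProduct.map f g ∘ₗ Coalgebra.comul (R := k)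

/-- convolution unit -/
def uE (k : Type) [Field k] (H : Type) [Ring H] [HopfAlgebra k H]
    (A : Type) [Ring A] [Algebra k A] : H →ₗ[k] A :=
  Algebra.linearMap k A ∘ₗ Coalgebra.counit (R := k)

lemma cv_apply (f g : H →ₗ[k] A) {a : H} (ρ : FinRep k a) :
    cv f g a = ∑ i, f (ρ.l i) * g (ρ.r i) := by
  simp [cv, ρ.comul_eq, map_sum, LinearMap.mul'_apply]

lemma uE_apply (a : H) : uE k H A a = algebraMap k A (Coalgebra.counit (R := k) a) := rfl

lemma cv_uE_left (f : H →ₗ[k] A) : cv (uE k H A) f = f := by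
  ext x
  obtain ρ := finRep (k := k) x
  rw [cv_apply _ _ ρ]
  calc ∑ i, uE k H A (ρ.l i) * f (ρ.r i)
      = ∑ i, f (Coalgebra.counit (R := k) (ρ.l i) • ρ.r i) := by
        refine Finset.sum_congr rfl fun i _ => ?_
        rw [uE_apply, ← Algebra.smul_def, map_smul]
    _ = f x := by rw [← map_sum, ρ.sum_counit_smul_left]

lemma cv_uE_right (f : H →ₗ[k] A) : cv f (uE k H A) = f := by
  ext x
  obtain ρ := finRep (k := k) x
  rw [cv_apply _ _ ρ]
  calc ∑ i, f (ρ.l i) * uE k H A (ρ.r i)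
      = ∑ i, f (Coalgebra.counit (R := k) (ρ.r i) • ρ.l i) := by
        refine Finset.sum_congr rfl fun i _ => ?_
        rw [uE_apply, ← Algebra.commutes, ← Algebra.smul_def, map_smul]
    _ = f x := by rw [← map_sum, ρ.sum_counit_smul_right]

lemma cv_assoc (f g h : H →ₗ[k] A) : cv (cv f g) h = cv f (cv g h) := by
  ext x
  obtain ρ := finRep (k := k) x
  have ρa := fun i => finRep (k := k) (ρ.l i)
  have ρb := fun i => finRep (k := k) (ρ.r i)
  rw [cv_apply _ _ ρ, cv_apply _ _ ρ]
  have hL : ∀ i, cv f g (ρ.l i) * h (ρ.r i)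
      = ∑ j, f ((ρa i).l j) * g ((ρa i).r j) * h (ρ.r i) := fun i => by
    rw [cv_apply _ _ (ρa i), Finset.sum_mul]
  have hR : ∀ i, f (ρ.l i) * cv g h (ρ.r i)
      = ∑ j, f (ρ.l i) * (g ((ρb i).l j) * h ((ρb i).r j)) := fun i => by
    rw [cv_apply _ _ (ρb i), Finset.mul_sum]
  simp_rw [hL, hR]
  have key := Coalgebra.sum_map_tmul_tmul_eq (R := k) f g h x (repr := ρ.toRepr)
    (a₁ := fun i => (ρa i).toRepr) (a₂ := fun i => (ρb i).toRepr)
  have key2 := congrArg (LinearMap.mul' k A ∘ₗ LinearMap.lTensor A (LinearMap.mul' k A)) key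
  simpa [FinRep.toRepr, map_sum, LinearMap.mul'_apply, mul_assoc] using key2.symm

end Conv

section Antipode

open LinearMap

lemma antipode_one : HopfAlgebra.antipode (R := k) (A := H) 1 = (1 : H) := by
  have h := HopfAlgebra.mul_antipode_rTensor_comul_apply (R := k) (1 : H)
  rw [Bialgebra.comul_one, Algebra.TensorProduct.one_def] at h
  simpa [LinearMap.mul'_apply] using h

lemma counit_antipode (a : H) :
    Coalgebra.counit (R := k) (HopfAlgebra.antipode (R := k) a) = Coalgebra.counit (R := k) a := by
  obtain ρ := finRep (k := k) a
  have h := congrArg (Coalgebra.counit (R := k)) ρ.antipode_mul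
  rw [Bialgebra.counit_algebraMap] at h
  rw [map_sum] at h
  calc Coalgebra.counit (R := k) (HopfAlgebra.antipode (R := k) a)
      = Coalgebra.counit (R := k)
          (HopfAlgebra.antipode (R := k) (∑ i, Coalgebra.counit (R := k) (ρ.r i) • ρ.l i)) := by
        rw [ρ.sum_counit_smul_right]
    _ = ∑ i, Coalgebra.counit (R := k) (HopfAlgebra.antipode (R := k) (ρ.l i)) *
          Coalgebra.counit (R := k) (ρ.r i) := by
        rw [map_sum, map_sum]
        exact Finset.sum_congr rfl fun i _ => by
          rw [map_smul, map_smul, smul_eq_mul, mul_comm]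
    _ = Coalgebra.counit (R := k) a := by
        rw [← h]
        exact Finset.sum_congr rfl fun i _ => by rw [Bialgebra.counit_mul]

/-- anti-comultiplicativity of the antipode -/
lemma comul_antipode_map :
    Coalgebra.comul (R := k) ∘ₗ HopfAlgebra.antipode (R := k) (A := H) =
      TensorProduct.map (HopfAlgebra.antipode (R := k)) (HopfAlgebra.antipode (R := k)) ∘ₗ
        (TensorProduct.comm k H H).toLinearMap ∘ₗ Coalgebra.comul (R := k) := by
  have h1 : cv (Coalgebra.comul (R := k) ∘ₗ HopfAlgebra.antipode (R := k) (A := H))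
      (Coalgebra.comul (R := k)) = uE k H (H ⊗[k] H) := by
    ext x
    obtain ρ := finRep (k := k) x
    rw [cv_apply _ _ ρ, uE_apply]
    calc ∑ i, (Coalgebra.comul (R := k) ∘ₗ HopfAlgebra.antipode (R := k)) (ρ.l i) *
          Coalgebra.comul (ρ.r i)
        = Coalgebra.comul (R := k) (∑ i, HopfAlgebra.antipode (R := k) (ρ.l i) * ρ.r i) := by
          rw [map_sum]
          exact Finset.sum_congr rfl fun i _ => by
            rw [LinearMap.comp_apply, Bialgebra.comul_mul]
      _ = algebraMap k (H ⊗[k] H) (Coalgebra.counit (R := k) x) := by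
          rw [ρ.antipode_mul, Bialgebra.comul_algebraMap]
  have h2 : cv (Coalgebra.comul (R := k))
      (TensorProduct.map (HopfAlgebra.antipode (R := k)) (HopfAlgebra.antipode (R := k)) ∘ₗ
        (TensorProduct.comm k H H).toLinearMap ∘ₗ Coalgebra.comul (R := k)) =
      uE k H (H ⊗[k] H) := by
    ext x
    obtain ρ := finRep (k := k) x
    have ρa := fun i => finRep (k := k) (ρ.l i)
    have ρb := fun i => finRep (k := k) (ρ.r i)
    have ρM := fun i j => finRep (k := k) ((ρb i).l j)
    set S' := HopfAlgebra.antipode (R := k) (A := H) with hS'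
    -- the shuffling map G
    set q : H ⊗[k] H →ₗ[k] H := LinearMap.mul' k H ∘ₗ lTensor H S' with hq
    set G : H ⊗[k] (H ⊗[k] (H ⊗[k] H)) →ₗ[k] H ⊗[k] H :=
      TensorProduct.map q q ∘ₗ
        (TensorProduct.tensorTensorTensorComm k H H H H).toLinearMap ∘ₗ
        lTensor (H ⊗[k] H) (TensorProduct.comm k H H).toLinearMap ∘ₗ
        (TensorProduct.assoc k H H (H ⊗[k] H)).symm.toLinearMap with hG
    have hGapp : ∀ u v c e : H, G (u ⊗ₜ[k] (v ⊗ₜ[k] (c ⊗ₜ[k] e))) =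
        (u * S' e) ⊗ₜ[k] (v * S' c) := by
      intro u v c e
      simp [hG, hq, LinearMap.mul'_apply]
    rw [cv_apply _ _ ρ, uE_apply]
    have step1 : ∑ i, Coalgebra.comul (R := k) (ρ.l i) *
        ((TensorProduct.map S' S' ∘ₗ (TensorProduct.comm k H H).toLinearMap ∘ₗ
          Coalgebra.comul (R := k)) (ρ.r i)) =
        ∑ i, ∑ j, ∑ m, G ((ρa i).l j ⊗ₜ[k] ((ρa i).r j ⊗ₜ[k]
          ((ρb i).l m ⊗ₜ[k] (ρb i).r m))) := by
      refine Finset.sum_congr rfl fun i _ => ?_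
      rw [LinearMap.comp_apply, LinearMap.comp_apply, (ρb i).comul_eq, map_sum, map_sum,
        (ρa i).comul_eq, Finset.sum_mul]
      refine Finset.sum_congr rfl fun j _ => ?_
      rw [Finset.mul_sum]
      refine Finset.sum_congr rfl fun m _ => ?_
      rw [hGapp]
      simp [Algebra.TensorProduct.tmul_mul_tmul]
    rw [step1]
    have key : ∑ i, ∑ j, ∑ m, G ((ρa i).l j ⊗ₜ[k] ((ρa i).r j ⊗ₜ[k]
          ((ρb i).l m ⊗ₜ[k] (ρb i).r m))) =
        ∑ i, ∑ j, ∑ m, G (ρ.l i ⊗ₜ[k] ((ρM i j).l m ⊗ₜ[k]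
          ((ρM i j).r m ⊗ₜ[k] (ρb i).r j))) := by
      have e1 := eTA ρ ρa ρb
      have e2 := eTB ρ ρb ρM
      have := congrArg G (e1.trans e2.symm)
      simpa [map_sum] using this
    rw [key]
    have collapse : ∀ i, ∑ j, ∑ m, G (ρ.l i ⊗ₜ[k] ((ρM i j).l m ⊗ₜ[k]
          ((ρM i j).r m ⊗ₜ[k] (ρb i).r j))) =
        (ρ.l i * S' (ρ.r i)) ⊗ₜ[k] 1 := by
      intro i
      calc ∑ j, ∑ m, G (ρ.l i ⊗ₜ[k] ((ρM i j).l m ⊗ₜ[k] ((ρM i j).r m ⊗ₜ[k] (ρb i).r j)))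
          = ∑ j, (ρ.l i * S' ((ρb i).r j)) ⊗ₜ[k]
              (∑ m, (ρM i j).l m * S' ((ρM i j).r m)) := by
            refine Finset.sum_congr rfl fun j _ => ?_
            rw [TensorProduct.tmul_sum]
            exact Finset.sum_congr rfl fun m _ => by rw [hGapp]
        _ = ∑ j, Coalgebra.counit (R := k) ((ρb i).l j) •
              ((ρ.l i * S' ((ρb i).r j)) ⊗ₜ[k] (1 : H)) := by
            refine Finset.sum_congr rfl fun j _ => ?_
            rw [(ρM i j).mul_antipode, Algebra.algebraMap_eq_smul_one, TensorProduct.tmul_smul]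
        _ = (ρ.l i * S' (∑ j, Coalgebra.counit (R := k) ((ρb i).l j) • (ρb i).r j)) ⊗ₜ[k] 1 := by
            rw [map_sum, Finset.mul_sum, TensorProduct.sum_tmul]
            exact Finset.sum_congr rfl fun j _ => by
              simp [map_smul, TensorProduct.smul_tmul', mul_smul_comm]
        _ = (ρ.l i * S' (ρ.r i)) ⊗ₜ[k] 1 := by rw [(ρb i).sum_counit_smul_left]
    rw [Finset.sum_congr rfl fun i _ => collapse i]
    rw [← TensorProduct.sum_tmul, ρ.mul_antipode, Algebra.TensorProduct.algebraMap_apply']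
    rw [Algebra.algebraMap_eq_smul_one (A := H), TensorProduct.smul_tmul,
      ← Algebra.algebraMap_eq_smul_one]
  calc Coalgebra.comul (R := k) ∘ₗ HopfAlgebra.antipode (R := k) (A := H)
      = cv (Coalgebra.comul (R := k) ∘ₗ HopfAlgebra.antipode (R := k) (A := H))
          (uE k H (H ⊗[k] H)) := (cv_uE_right _).symm
    _ = cv (Coalgebra.comul (R := k) ∘ₗ HopfAlgebra.antipode (R := k) (A := H))
          (cv (Coalgebra.comul (R := k))
            (TensorProduct.map (HopfAlgebra.antipode (R := k)) (HopfAlgebra.antipode (R := k)) ∘ₗ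
              (TensorProduct.comm k H H).toLinearMap ∘ₗ Coalgebra.comul (R := k))) := by
        rw [h2]
    _ = cv (cv (Coalgebra.comul (R := k) ∘ₗ HopfAlgebra.antipode (R := k) (A := H))
          (Coalgebra.comul (R := k)))
          (TensorProduct.map (HopfAlgebra.antipode (R := k)) (HopfAlgebra.antipode (R := k)) ∘ₗ
            (TensorProduct.comm k H H).toLinearMap ∘ₗ Coalgebra.comul (R := k)) :=
        (cv_assoc _ _ _).symm
    _ = _ := by rw [h1, cv_uE_left]

end Antipode


section SinvSec

open LinearMap

variable (Sinv : H →ₗ[k] H)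

lemma S_Sinv (hS1 : HopfAlgebra.antipode (R := k) (A := H) ∘ₗ Sinv = LinearMap.id) (x : H) :
    HopfAlgebra.antipode (R := k) (Sinv x) = x := LinearMap.congr_fun hS1 x

lemma Sinv_S (hS2 : Sinv ∘ₗ HopfAlgebra.antipode (R := k) (A := H) = LinearMap.id) (x : H) :
    Sinv (HopfAlgebra.antipode (R := k) x) = x := LinearMap.congr_fun hS2 x

lemma comul_antipode_rep {a : H} (ρ : FinRep k a) :
    Coalgebra.comul (R := k) (HopfAlgebra.antipode (R := k) a) =
      ∑ i, HopfAlgebra.antipode (R := k) (ρ.r i) ⊗ₜ[k] HopfAlgebra.antipode (R := k) (ρ.l i) := by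
  have h := LinearMap.congr_fun (comul_antipode_map (k := k) (H := H)) a
  simp only [LinearMap.comp_apply, LinearEquiv.coe_coe] at h
  rw [h, ρ.comul_eq, map_sum, map_sum]
  simp

/-- representation of `Δ(S a)` -/
def FinRep.srep {a : H} (ρ : FinRep k a) : FinRep k (HopfAlgebra.antipode (R := k) a) :=
  ⟨ρ.n, fun i => HopfAlgebra.antipode (R := k) (ρ.r i),
    fun i => HopfAlgebra.antipode (R := k) (ρ.l i), (comul_antipode_rep ρ).symm⟩

lemma comul_Sinv_rep (hS1 : HopfAlgebra.antipode (R := k) (A := H) ∘ₗ Sinv = LinearMap.id)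
    (hS2 : Sinv ∘ₗ HopfAlgebra.antipode (R := k) (A := H) = LinearMap.id)
    {a : H} (ρ : FinRep k a) :
    Coalgebra.comul (R := k) (Sinv a) = ∑ i, Sinv (ρ.r i) ⊗ₜ[k] Sinv (ρ.l i) := by
  have key : ∀ t : H ⊗[k] H,
      (TensorProduct.comm k H H) (TensorProduct.map Sinv Sinv
        (TensorProduct.map (HopfAlgebra.antipode (R := k)) (HopfAlgebra.antipode (R := k))
          ((TensorProduct.comm k H H) t))) = t := by
    intro t
    induction t using TensorProduct.induction_on with
    | zero => simp
    | tmul x y => simp [Sinv_S Sinv hS2]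
    | add u v hu hv => simp only [map_add, hu, hv]
  have h := LinearMap.congr_fun (comul_antipode_map (k := k) (H := H)) (Sinv a)
  simp only [LinearMap.comp_apply, LinearEquiv.coe_coe, S_Sinv Sinv hS1] at h
  have h2 := congrArg (fun t => (TensorProduct.comm k H H)
    (TensorProduct.map Sinv Sinv t)) h
  rw [key] at h2
  rw [← h2, ρ.comul_eq, map_sum, map_sum]
  simp

/-- representation of `Δ(Sinv a)` -/
def FinRep.sinvrep (hS1 : HopfAlgebra.antipode (R := k) (A := H) ∘ₗ Sinv = LinearMap.id)
    (hS2 : Sinv ∘ₗ HopfAlgebra.antipode (R := k) (A := H) = LinearMap.id)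
    {a : H} (ρ : FinRep k a) : FinRep k (Sinv a) :=
  ⟨ρ.n, fun i => Sinv (ρ.r i), fun i => Sinv (ρ.l i),
    (comul_Sinv_rep Sinv hS1 hS2 ρ).symm⟩

lemma counit_Sinv (hS1 : HopfAlgebra.antipode (R := k) (A := H) ∘ₗ Sinv = LinearMap.id)
    (a : H) : Coalgebra.counit (R := k) (Sinv a) = Coalgebra.counit (R := k) a := by
  have h := counit_antipode (k := k) (Sinv a)
  rw [S_Sinv Sinv hS1] at h
  exact h.symm

lemma Sinv_one (hS2 : Sinv ∘ₗ HopfAlgebra.antipode (R := k) (A := H) = LinearMap.id) :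
    Sinv 1 = (1 : H) := by
  have h := Sinv_S Sinv hS2 (1 : H)
  rwa [antipode_one] at h

lemma FinRep.sinv_mul (hS1 : HopfAlgebra.antipode (R := k) (A := H) ∘ₗ Sinv = LinearMap.id)
    (hS2 : Sinv ∘ₗ HopfAlgebra.antipode (R := k) (A := H) = LinearMap.id)
    {a : H} (ρ : FinRep k a) :
    ∑ i, Sinv (ρ.r i) * ρ.l i = algebraMap k H (Coalgebra.counit (R := k) a) := by
  have h := (ρ.sinvrep Sinv hS1 hS2).mul_antipode
  simp only [FinRep.sinvrep, S_Sinv Sinv hS1, counit_Sinv Sinv hS1] at h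
  exact h

lemma FinRep.mul_sinv (hS1 : HopfAlgebra.antipode (R := k) (A := H) ∘ₗ Sinv = LinearMap.id)
    (hS2 : Sinv ∘ₗ HopfAlgebra.antipode (R := k) (A := H) = LinearMap.id)
    {a : H} (ρ : FinRep k a) :
    ∑ i, ρ.r i * Sinv (ρ.l i) = algebraMap k H (Coalgebra.counit (R := k) a) := by
  have h := (ρ.sinvrep Sinv hS1 hS2).antipode_mul
  simp only [FinRep.sinvrep, S_Sinv Sinv hS1, counit_Sinv Sinv hS1] at h
  exact h

end SinvSec


section PD

open LinearMap

/-- the trivial representation of `1` -/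
def oneRep : FinRep k (1 : H) :=
  ⟨1, fun _ => 1, fun _ => 1, by simp [Bialgebra.comul_one, Algebra.TensorProduct.one_def]⟩

variable {p d : H ⊗[k] H →ₗ[k] H}

lemma comul_p (hp : IsCoalgMorCop k H p) {x y : H} (ρx : FinRep k x) (ρy : FinRep k y) :
    Coalgebra.comul (R := k) (p (x ⊗ₜ[k] y)) =
      ∑ i, ∑ j, p (ρx.l i ⊗ₜ[k] ρy.r j) ⊗ₜ[k] p (ρx.r i ⊗ₜ[k] ρy.l j) := by
  have h := LinearMap.congr_fun hp.1 (x ⊗ₜ[k] y)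
  simp only [LinearMap.comp_apply] at h
  rw [h, comulTCop]
  simp only [LinearMap.comp_apply, LinearEquiv.coe_coe, TensorProduct.map_tmul]
  rw [ρx.comul_eq, comulCop, LinearMap.comp_apply, ρy.comul_eq]
  simp only [LinearEquiv.coe_coe, map_sum, TensorProduct.comm_tmul,
    TensorProduct.sum_tmul, TensorProduct.tmul_sum, TensorProduct.map_tmul,
    TensorProduct.tensorTensorTensorComm_tmul]
  rw [Finset.sum_comm]

lemma counit_p (hp : IsCoalgMorCop k H p) (x y : H) :
    Coalgebra.counit (R := k) (p (x ⊗ₜ[k] y)) =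
      Coalgebra.counit (R := k) x * Coalgebra.counit (R := k) y := by
  have h := LinearMap.congr_fun hp.2 (x ⊗ₜ[k] y)
  simp only [LinearMap.comp_apply] at h
  rw [h, counitT]
  simp

/-- representation of `Δ(p (x ⊗ y))`, doubly indexed -/
def pRep (hp : IsCoalgMorCop k H p) {x y : H} (ρx : FinRep k x) (ρy : FinRep k y) :
    FinRep k (p (x ⊗ₜ[k] y)) where
  n := ρx.n * ρy.n
  l := fun i => p (ρx.l ((finProdFinEquiv.symm i).1) ⊗ₜ[k] ρy.r ((finProdFinEquiv.symm i).2))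
  r := fun i => p (ρx.r ((finProdFinEquiv.symm i).1) ⊗ₜ[k] ρy.l ((finProdFinEquiv.symm i).2))
  eq := by
    have hF := Equiv.sum_comp finProdFinEquiv.symm
      (fun q : Fin ρx.n × Fin ρy.n => p (ρx.l q.1 ⊗ₜ[k] ρy.r q.2) ⊗ₜ[k]
        p (ρx.r q.1 ⊗ₜ[k] ρy.l q.2))
    rw [comul_p hp ρx ρy, hF]
    exact Fintype.sum_prod_type _

lemma comulCop_apply {a : H} (ρ : FinRep k a) :
    comulCop k H a = ∑ i, ρ.r i ⊗ₜ[k] ρ.l i := by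
  rw [comulCop, LinearMap.comp_apply, ρ.comul_eq]
  simp

set_option synthInstance.maxHeartbeats 400000 in
lemma tm_apply' (p : H ⊗[k] H →ₗ[k] H) {x : H} {ι : Type} [Fintype ι] (f g : ι → H)
    (hfg : ∑ i, f i ⊗ₜ[k] g i = Coalgebra.comul (R := k) x) (y : H) :
    tmOp k H p (x ⊗ₜ[k] y) = ∑ i, p (y ⊗ₜ[k] f i) * g i := by
  rw [tmOp]
  simp only [LinearMap.comp_apply, LinearEquiv.coe_coe, TensorProduct.comm_tmul]
  rw [Gmap]
  simp only [LinearMap.comp_apply, LinearEquiv.coe_coe, lTensor_tmul]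
  rw [← hfg, TensorProduct.tmul_sum, map_sum, map_sum, map_sum]
  simp [LinearMap.mul'_apply]

lemma tm_apply (p : H ⊗[k] H →ₗ[k] H) {x : H} (ρ : FinRep k x) (y : H) :
    tmOp k H p (x ⊗ₜ[k] y) = ∑ i, p (y ⊗ₜ[k] ρ.l i) * ρ.r i :=
  tm_apply' p ρ.l ρ.r ρ.eq y

lemma TOp_apply (p : H ⊗[k] H →ₗ[k] H) (Sinv : H →ₗ[k] H) {x : H} (ρ : FinRep k x) :
    TOp k H p Sinv x =
      ∑ i, p (HopfAlgebra.antipode (R := k) (ρ.l i) ⊗ₜ[k] Sinv (ρ.r i)) := by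
  rw [TOp]
  simp only [LinearMap.comp_apply]
  rw [ρ.comul_eq, map_sum, map_sum]
  simp

lemma p_alg (hp1 : ∀ x : H, p (x ⊗ₜ[k] (1 : H)) = x) (x : H) (r : k) :
    p (x ⊗ₜ[k] algebraMap k H r) = r • x := by
  rw [Algebra.algebraMap_eq_smul_one, TensorProduct.tmul_smul, map_smul, hp1]

/-- `1 · x = ε(x) 1` -/
lemma p_one (hp : IsCoalgMorCop k H p) (hd1 : ∀ x : H, d (x ⊗ₜ[k] (1 : H)) = x)
    (hdist : QBraceDistrib k H p d) (Sinv : H →ₗ[k] H)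
    (hS1 : HopfAlgebra.antipode (R := k) (A := H) ∘ₗ Sinv = LinearMap.id)
    (hS2 : Sinv ∘ₗ HopfAlgebra.antipode (R := k) (A := H) = LinearMap.id) (x : H) :
    p ((1 : H) ⊗ₜ[k] x) = algebraMap k H (Coalgebra.counit (R := k) x) := by
  have fmul : ∀ (y : H) (ρ : FinRep k y),
      p ((1 : H) ⊗ₜ[k] y) = ∑ i, p (1 ⊗ₜ[k] ρ.l i) * p (1 ⊗ₜ[k] ρ.r i) := by
    intro y ρ
    have h := (hdist 1 1 y ρ.n 1 ρ.l ρ.r (fun _ => 1) (fun _ => 1) ρ.eq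
      (by simp [Bialgebra.comul_one, Algebra.TensorProduct.one_def])).1
    simpa [hd1] using h
  have fcom : ∀ (y : H) (ρ : FinRep k y),
      Coalgebra.comul (R := k) (p (1 ⊗ₜ[k] y)) =
        ∑ i, p (1 ⊗ₜ[k] ρ.r i) ⊗ₜ[k] p (1 ⊗ₜ[k] ρ.l i) := by
    intro y ρ
    have h := comul_p hp (oneRep (k := k) (H := H)) ρ
    rw [h]
    exact Fin.sum_univ_one _
  have fcou : ∀ y : H, Coalgebra.counit (R := k) (p (1 ⊗ₜ[k] y)) =
      Coalgebra.counit (R := k) y := by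
    intro y; rw [counit_p hp, Bialgebra.counit_one, one_mul]
  set φ : H →ₗ[k] H := p ∘ₗ (TensorProduct.mk k H H 1) ∘ₗ Sinv with hφ
  have φap : ∀ y : H, φ y = p (1 ⊗ₜ[k] Sinv y) := fun y => rfl
  have φcom : ∀ (y : H) (ρ : FinRep k y),
      Coalgebra.comul (R := k) (φ y) = ∑ i, φ (ρ.l i) ⊗ₜ[k] φ (ρ.r i) := by
    intro y ρ
    rw [φap, fcom (Sinv y) (ρ.sinvrep Sinv hS1 hS2)]
    simp [FinRep.sinvrep, φap]
    rfl
  have φcou : ∀ y : H, Coalgebra.counit (R := k) (φ y) = Coalgebra.counit (R := k) y := by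
    intro y; rw [φap, fcou, counit_Sinv Sinv hS1]
  have φconv : ∀ (y : H) (ρ : FinRep k y), φ y = ∑ i, φ (ρ.r i) * φ (ρ.l i) := by
    intro y ρ
    rw [φap, fmul (Sinv y) (ρ.sinvrep Sinv hS1 hS2)]
    simp [FinRep.sinvrep, φap]
    rfl
  have fLx : ∀ (y : H) (ρ : FinRep k y),
      ∑ i, φ (ρ.r i) * Sinv (φ (ρ.l i)) = algebraMap k H (Coalgebra.counit (R := k) y) := by
    intro y ρ
    have h := FinRep.mul_sinv Sinv hS1 hS2
      (⟨ρ.n, fun i => φ (ρ.l i), fun i => φ (ρ.r i), (φcom y ρ).symm⟩ : FinRep k (φ y))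
    simpa [φcou y] using h
  have main : ∀ y : H, φ y = algebraMap k H (Coalgebra.counit (R := k) y) := by
    intro y
    obtain ρ := finRep (k := k) y
    have ρa := fun i => finRep (k := k) (ρ.l i)
    have ρb := fun i => finRep (k := k) (ρ.r i)
    set L : H ⊗[k] (H ⊗[k] H) →ₗ[k] H :=
      LinearMap.mul' k H ∘ₗ (TensorProduct.comm k H H).toLinearMap ∘ₗ
        lTensor H (LinearMap.mul' k H ∘ₗ (TensorProduct.comm k H H).toLinearMap) ∘ₗ
        TensorProduct.map (Sinv ∘ₗ φ) (TensorProduct.map φ φ) with hL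
    have Lap : ∀ a b c : H, L (a ⊗ₜ[k] (b ⊗ₜ[k] c)) = φ c * φ b * Sinv (φ a) := by
      intro a b c
      simp [hL, LinearMap.mul'_apply]
    have way1 : ∑ i, ∑ j, L (ρ.l i ⊗ₜ[k] ((ρb i).l j ⊗ₜ[k] (ρb i).r j)) =
        algebraMap k H (Coalgebra.counit (R := k) y) := by
      rw [← fLx y ρ]
      refine Finset.sum_congr rfl fun i _ => ?_
      calc ∑ j, L (ρ.l i ⊗ₜ[k] ((ρb i).l j ⊗ₜ[k] (ρb i).r j))
          = (∑ j, φ ((ρb i).r j) * φ ((ρb i).l j)) * Sinv (φ (ρ.l i)) := by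
            rw [Finset.sum_mul]
            exact Finset.sum_congr rfl fun j _ => Lap _ _ _
        _ = φ (ρ.r i) * Sinv (φ (ρ.l i)) := by rw [← φconv _ (ρb i)]
    have way2 : ∑ i, ∑ j, L ((ρa i).l j ⊗ₜ[k] ((ρa i).r j ⊗ₜ[k] ρ.r i)) = φ y := by
      calc ∑ i, ∑ j, L ((ρa i).l j ⊗ₜ[k] ((ρa i).r j ⊗ₜ[k] ρ.r i))
          = ∑ i, ∑ j, φ (ρ.r i) * (φ ((ρa i).r j) * Sinv (φ ((ρa i).l j))) := by
            refine Finset.sum_congr rfl fun i _ => Finset.sum_congr rfl fun j _ => ?_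
            rw [Lap, mul_assoc]
        _ = ∑ i, φ (ρ.r i) * algebraMap k H (Coalgebra.counit (R := k) (ρ.l i)) := by
            refine Finset.sum_congr rfl fun i _ => ?_
            rw [← Finset.mul_sum, fLx _ (ρa i)]
        _ = ∑ i, Coalgebra.counit (R := k) (ρ.l i) • φ (ρ.r i) := by
            refine Finset.sum_congr rfl fun i _ => ?_
            rw [← Algebra.commutes, ← Algebra.smul_def]
        _ = φ y := by
            rw [show (∑ i, Coalgebra.counit (R := k) (ρ.l i) • φ (ρ.r i)) =
                φ (∑ i, Coalgebra.counit (R := k) (ρ.l i) • ρ.r i) from by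
              rw [map_sum]
              exact Finset.sum_congr rfl fun i _ => (map_smul φ _ _).symm]
            rw [ρ.sum_counit_smul_left]
    have e := e3 ρ ρa ρb
    have he := congrArg L e
    simp only [map_sum] at he
    rw [way2, way1] at he
    exact he
  have h := main (HopfAlgebra.antipode (R := k) x)
  rw [φap, Sinv_S Sinv hS2, counit_antipode] at h
  exact h

lemma expandV (p : H ⊗[k] H →ₗ[k] H) (Sinv : H →ₗ[k] H) {y : H} (ρ1 : FinRep k y)
    (ρ2 : ∀ j, FinRep k (ρ1.r j)) :
    tmOp k H p ((lTensor H (TOp k H p Sinv)) (comulCop k H y)) =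
      ∑ j, ∑ m, p (TOp k H p Sinv (ρ1.l j) ⊗ₜ[k] (ρ2 j).l m) * (ρ2 j).r m := by
  rw [comulCop_apply ρ1, map_sum, map_sum]
  refine Finset.sum_congr rfl fun j _ => ?_
  rw [lTensor_tmul, tm_apply p (ρ2 j)]

/-- first bullet: `id ∗ T = ηε` -/
lemma bullet1 (hpm : RightOpModule k H p) (Sinv : H →ₗ[k] H)
    (hS1 : HopfAlgebra.antipode (R := k) (A := H) ∘ₗ Sinv = LinearMap.id)
    (hS2 : Sinv ∘ₗ HopfAlgebra.antipode (R := k) (A := H) = LinearMap.id) :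
    tmOp k H p ∘ₗ LinearMap.lTensor H (TOp k H p Sinv) ∘ₗ comulCop k H =
      Algebra.linearMap k H ∘ₗ Coalgebra.counit (R := k) := by
  ext h
  simp only [LinearMap.comp_apply, Algebra.linearMap_apply]
  obtain ρ := finRep (k := k) h
  have ρa := fun i => finRep (k := k) (ρ.l i)
  have ρb := fun i => finRep (k := k) (ρ.r i)
  have ρM := fun i j => finRep (k := k) ((ρb i).l j)
  rw [expandV p Sinv ρ ρb]
  -- expand T and use the module law
  set S' := HopfAlgebra.antipode (R := k) (A := H) with hS'
  set q2 : H ⊗[k] H →ₗ[k] H :=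
    LinearMap.mul' k H ∘ₗ (TensorProduct.comm k H H).toLinearMap ∘ₗ rTensor H Sinv with hq2
  set L : H ⊗[k] (H ⊗[k] (H ⊗[k] H)) →ₗ[k] H :=
    LinearMap.mul' k H ∘ₗ rTensor H p ∘ₗ (TensorProduct.assoc k H H H).symm.toLinearMap ∘ₗ
      TensorProduct.map S' (rTensor H q2 ∘ₗ (TensorProduct.assoc k H H H).symm.toLinearMap)
    with hL
  have Lap : ∀ a b c e : H, L (a ⊗ₜ[k] (b ⊗ₜ[k] (c ⊗ₜ[k] e))) =
      p (S' a ⊗ₜ[k] (c * Sinv b)) * e := by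
    intro a b c e
    simp [hL, hq2, LinearMap.mul'_apply]
  have step1 : ∑ j, ∑ m, p (TOp k H p Sinv (ρ.l j) ⊗ₜ[k] (ρb j).l m) * (ρb j).r m =
      ∑ i, ∑ m, ∑ j, L ((ρa i).l j ⊗ₜ[k] ((ρa i).r j ⊗ₜ[k]
        ((ρb i).l m ⊗ₜ[k] (ρb i).r m))) := by
    refine Finset.sum_congr rfl fun i _ => Finset.sum_congr rfl fun m _ => ?_
    rw [TOp_apply p Sinv (ρa i), TensorProduct.sum_tmul, map_sum, Finset.sum_mul]
    refine Finset.sum_congr rfl fun j _ => ?_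
    rw [Lap, ← hpm.2]
  rw [step1]
  have swap : ∀ i, (∑ m, ∑ j, L ((ρa i).l j ⊗ₜ[k] ((ρa i).r j ⊗ₜ[k]
      ((ρb i).l m ⊗ₜ[k] (ρb i).r m)))) = ∑ j, ∑ m, L ((ρa i).l j ⊗ₜ[k] ((ρa i).r j ⊗ₜ[k]
      ((ρb i).l m ⊗ₜ[k] (ρb i).r m))) := fun i => Finset.sum_comm
  rw [Finset.sum_congr rfl fun i _ => swap i]
  have e := (eTA ρ ρa ρb).trans (eTB ρ ρb ρM).symm
  have he := congrArg L e
  simp only [map_sum] at he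
  rw [he]
  have collapse : ∀ i, (∑ j, ∑ m, L (ρ.l i ⊗ₜ[k] ((ρM i j).l m ⊗ₜ[k]
      ((ρM i j).r m ⊗ₜ[k] (ρb i).r j)))) = S' (ρ.l i) * ρ.r i := by
    intro i
    have inner : ∀ j, (∑ m, L (ρ.l i ⊗ₜ[k] ((ρM i j).l m ⊗ₜ[k]
        ((ρM i j).r m ⊗ₜ[k] (ρb i).r j)))) =
        Coalgebra.counit (R := k) ((ρb i).l j) • S' (ρ.l i) * (ρb i).r j := by
      intro j
      calc ∑ m, L (ρ.l i ⊗ₜ[k] ((ρM i j).l m ⊗ₜ[k] ((ρM i j).r m ⊗ₜ[k] (ρb i).r j)))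
          = p (S' (ρ.l i) ⊗ₜ[k] (∑ m, (ρM i j).r m * Sinv ((ρM i j).l m))) * (ρb i).r j := by
            rw [TensorProduct.tmul_sum, map_sum, Finset.sum_mul]
            exact Finset.sum_congr rfl fun m _ => by rw [Lap]
        _ = Coalgebra.counit (R := k) ((ρb i).l j) • S' (ρ.l i) * (ρb i).r j := by
            rw [FinRep.mul_sinv Sinv hS1 hS2 (ρM i j), p_alg hpm.1]
    rw [Finset.sum_congr rfl fun j _ => inner j]
    calc ∑ j, Coalgebra.counit (R := k) ((ρb i).l j) • S' (ρ.l i) * (ρb i).r j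
        = S' (ρ.l i) * ∑ j, Coalgebra.counit (R := k) ((ρb i).l j) • (ρb i).r j := by
          rw [Finset.mul_sum]
          exact Finset.sum_congr rfl fun j _ => by
            rw [smul_mul_assoc, mul_smul_comm]
      _ = S' (ρ.l i) * ρ.r i := by rw [(ρb i).sum_counit_smul_left]
  rw [Finset.sum_congr rfl fun i _ => collapse i, ρ.antipode_mul]

lemma bullet1_sum (hpm : RightOpModule k H p) (Sinv : H →ₗ[k] H)
    (hS1 : HopfAlgebra.antipode (R := k) (A := H) ∘ₗ Sinv = LinearMap.id)
    (hS2 : Sinv ∘ₗ HopfAlgebra.antipode (R := k) (A := H) = LinearMap.id)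
    {y : H} (ρ1 : FinRep k y) (ρ2 : ∀ j, FinRep k (ρ1.r j)) :
    ∑ j, ∑ m, p (TOp k H p Sinv (ρ1.l j) ⊗ₜ[k] (ρ2 j).l m) * (ρ2 j).r m =
      algebraMap k H (Coalgebra.counit (R := k) y) := by
  rw [← expandV p Sinv ρ1 ρ2]
  have h := LinearMap.congr_fun (bullet1 hpm Sinv hS1 hS2) y
  simpa using h

/-- `T(h₁) · h₂ = S(h)` -/
lemma lemA (hpm : RightOpModule k H p) (Sinv : H →ₗ[k] H)
    (hS1 : HopfAlgebra.antipode (R := k) (A := H) ∘ₗ Sinv = LinearMap.id)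
    (hS2 : Sinv ∘ₗ HopfAlgebra.antipode (R := k) (A := H) = LinearMap.id)
    {h : H} (ρ : FinRep k h) :
    ∑ i, p (TOp k H p Sinv (ρ.l i) ⊗ₜ[k] ρ.r i) =
      HopfAlgebra.antipode (R := k) h := by
  set S' := HopfAlgebra.antipode (R := k) (A := H) with hS'
  have ρa := fun i => finRep (k := k) (ρ.l i)
  have ρb := fun i => finRep (k := k) (ρ.r i)
  have ρe := fun i j => finRep (k := k) ((ρb i).r j)
  have ρδ := fun i j => finRep (k := k) ((ρa i).r j)
  set q3 : H ⊗[k] H →ₗ[k] H := LinearMap.mul' k H ∘ₗ lTensor H S' with hq3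
  set L : H ⊗[k] (H ⊗[k] (H ⊗[k] H)) →ₗ[k] H :=
    LinearMap.mul' k H ∘ₗ TensorProduct.map p LinearMap.id ∘ₗ
      (TensorProduct.assoc k H H H).symm.toLinearMap ∘ₗ
      TensorProduct.map (TOp k H p Sinv) (lTensor H q3) with hL
  have Lap : ∀ a c w z : H, L (a ⊗ₜ[k] (c ⊗ₜ[k] (w ⊗ₜ[k] z))) =
      p (TOp k H p Sinv a ⊗ₜ[k] c) * (w * S' z) := by
    intro a c w z
    simp [hL, hq3, LinearMap.mul'_apply]
  have way1 : ∑ i, ∑ j, ∑ m, L (ρ.l i ⊗ₜ[k] ((ρb i).l j ⊗ₜ[k]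
      ((ρe i j).l m ⊗ₜ[k] (ρe i j).r m))) = ∑ i, p (TOp k H p Sinv (ρ.l i) ⊗ₜ[k] ρ.r i) := by
    refine Finset.sum_congr rfl fun i _ => ?_
    calc ∑ j, ∑ m, L (ρ.l i ⊗ₜ[k] ((ρb i).l j ⊗ₜ[k] ((ρe i j).l m ⊗ₜ[k] (ρe i j).r m)))
        = ∑ j, Coalgebra.counit (R := k) ((ρb i).r j) •
            p (TOp k H p Sinv (ρ.l i) ⊗ₜ[k] (ρb i).l j) := by
          refine Finset.sum_congr rfl fun j _ => ?_
          calc ∑ m, L (ρ.l i ⊗ₜ[k] ((ρb i).l j ⊗ₜ[k] ((ρe i j).l m ⊗ₜ[k] (ρe i j).r m)))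
              = p (TOp k H p Sinv (ρ.l i) ⊗ₜ[k] (ρb i).l j) *
                  (∑ m, (ρe i j).l m * S' ((ρe i j).r m)) := by
                rw [Finset.mul_sum]
                exact Finset.sum_congr rfl fun m _ => by rw [Lap]
            _ = _ := by
                rw [(ρe i j).mul_antipode, ← Algebra.commutes, ← Algebra.smul_def]
      _ = p (TOp k H p Sinv (ρ.l i) ⊗ₜ[k] (∑ j, Coalgebra.counit (R := k) ((ρb i).r j) •
            (ρb i).l j)) := by
          rw [TensorProduct.tmul_sum, map_sum]
          exact Finset.sum_congr rfl fun j _ => by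
            rw [TensorProduct.tmul_smul, map_smul]
      _ = p (TOp k H p Sinv (ρ.l i) ⊗ₜ[k] ρ.r i) := by rw [(ρb i).sum_counit_smul_right]
  have way2 : ∑ i, ∑ j, ∑ m, L ((ρa i).l j ⊗ₜ[k] ((ρδ i j).l m ⊗ₜ[k]
      ((ρδ i j).r m ⊗ₜ[k] ρ.r i))) = S' h := by
    calc ∑ i, ∑ j, ∑ m, L ((ρa i).l j ⊗ₜ[k] ((ρδ i j).l m ⊗ₜ[k] ((ρδ i j).r m ⊗ₜ[k] ρ.r i)))
        = ∑ i, (∑ j, ∑ m, p (TOp k H p Sinv ((ρa i).l j) ⊗ₜ[k] (ρδ i j).l m) *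
            (ρδ i j).r m) * S' (ρ.r i) := by
          refine Finset.sum_congr rfl fun i _ => ?_
          rw [Finset.sum_mul]
          refine Finset.sum_congr rfl fun j _ => ?_
          rw [Finset.sum_mul]
          exact Finset.sum_congr rfl fun m _ => by rw [Lap, mul_assoc]
      _ = ∑ i, Coalgebra.counit (R := k) (ρ.l i) • S' (ρ.r i) := by
          refine Finset.sum_congr rfl fun i _ => ?_
          rw [bullet1_sum hpm Sinv hS1 hS2 (ρa i) (ρδ i), Algebra.smul_def]
      _ = S' h := by
          rw [show (∑ i, Coalgebra.counit (R := k) (ρ.l i) • S' (ρ.r i)) =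
              S' (∑ i, Coalgebra.counit (R := k) (ρ.l i) • ρ.r i) from by
            rw [map_sum]
            exact Finset.sum_congr rfl fun i _ => (map_smul S' _ _).symm]
          rw [ρ.sum_counit_smul_left]
  have e := (eRN ρ ρb ρe).trans (eTC ρ ρa ρδ).symm
  have he := congrArg L e
  simp only [map_sum] at he
  rw [way1, way2] at he
  exact he

lemma tm_p_apply (hp : IsCoalgMorCop k H p) {x y : H} (ρx : FinRep k x) (ρy : FinRep k y)
    (w : H) :
    tmOp k H p (p (x ⊗ₜ[k] y) ⊗ₜ[k] w) =
      ∑ i, ∑ j, p (w ⊗ₜ[k] p (ρx.l i ⊗ₜ[k] ρy.r j)) * p (ρx.r i ⊗ₜ[k] ρy.l j) := by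
  rw [tm_apply' p (ι := Fin ρx.n × Fin ρy.n)
    (fun q => p (ρx.l q.1 ⊗ₜ[k] ρy.r q.2)) (fun q => p (ρx.r q.1 ⊗ₜ[k] ρy.l q.2))
    (by rw [comul_p hp ρx ρy]; exact Fintype.sum_prod_type _) w]
  exact Fintype.sum_prod_type _

/-- third bullet: `(kk × l) · h = (kk · h₁) × (l · h₂)` -/
lemma bullet3 (hp : IsCoalgMorCop k H p) (hexch : ExchangeId k H p d)
    (hcyc : QCycleConds k H p d) (hdist : QBraceDistrib k H p d)
    (h kk l : H) (n : ℕ) (h1 h2 : Fin n → H)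
    (hrep : (∑ i, h1 i ⊗ₜ[k] h2 i) = Coalgebra.comul (R := k) h) :
    p (tmOp k H p (kk ⊗ₜ[k] l) ⊗ₜ[k] h) =
      ∑ i, tmOp k H p (p (kk ⊗ₜ[k] h1 i) ⊗ₜ[k] p (l ⊗ₜ[k] h2 i)) := by
  obtain ρk := finRep (k := k) kk
  have ρk1 := fun i => finRep (k := k) (ρk.l i)
  have ρk2 := fun i => finRep (k := k) (ρk.r i)
  have ρU := fun a => finRep (k := k) (h1 a)
  have ρC := fun a => finRep (k := k) (h2 a)
  -- step 0 and 1 : expand the left hand side and use distributivity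
  have step1 : p (tmOp k H p (kk ⊗ₜ[k] l) ⊗ₜ[k] h) =
      ∑ i, ∑ a, ∑ j, p (p (l ⊗ₜ[k] ρk.l i) ⊗ₜ[k] d (h1 a ⊗ₜ[k] (ρk2 i).r j)) *
        p ((ρk2 i).l j ⊗ₜ[k] h2 a) := by
    rw [tm_apply p ρk l, TensorProduct.sum_tmul, map_sum]
    exact Finset.sum_congr rfl fun i _ =>
      (hdist (p (l ⊗ₜ[k] ρk.l i)) (ρk.r i) h n (ρk2 i).n h1 h2 (ρk2 i).l (ρk2 i).r
        hrep (ρk2 i).eq).1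
  rw [step1]
  -- step 2 : exchange identity
  have step2 : ∀ i, (∑ a, ∑ j, p (p (l ⊗ₜ[k] ρk.l i) ⊗ₜ[k] d (h1 a ⊗ₜ[k] (ρk2 i).r j)) *
        p ((ρk2 i).l j ⊗ₜ[k] h2 a)) =
      ∑ j, ∑ a, p (p (l ⊗ₜ[k] ρk.l i) ⊗ₜ[k] d (h2 a ⊗ₜ[k] (ρk2 i).l j)) *
        p ((ρk2 i).r j ⊗ₜ[k] h1 a) := by
    intro i
    set X := p (l ⊗ₜ[k] ρk.l i) with hX
    set W : H ⊗[k] H →ₗ[k] H :=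
      LinearMap.mul' k H ∘ₗ LinearMap.rTensor H (p ∘ₗ TensorProduct.mk k H H X) with hW
    have Wap : ∀ u v : H, W (u ⊗ₜ[k] v) = p (X ⊗ₜ[k] u) * v := by
      intro u v
      simp [hW, LinearMap.mul'_apply]
    have he := hexch (ρk.r i) h (ρk2 i).n n (ρk2 i).l (ρk2 i).r h1 h2 (ρk2 i).eq hrep
    have heW := congrArg W he
    simp only [map_sum] at heW
    calc ∑ a, ∑ j, p (X ⊗ₜ[k] d (h1 a ⊗ₜ[k] (ρk2 i).r j)) * p ((ρk2 i).l j ⊗ₜ[k] h2 a)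
        = ∑ j, ∑ a, W (d (h1 a ⊗ₜ[k] (ρk2 i).r j) ⊗ₜ[k] p ((ρk2 i).l j ⊗ₜ[k] h2 a)) := by
          rw [Finset.sum_comm]
          exact Finset.sum_congr rfl fun j _ => Finset.sum_congr rfl fun a _ =>
            (Wap _ _).symm
      _ = ∑ j, ∑ a, W (d (h2 a ⊗ₜ[k] (ρk2 i).l j) ⊗ₜ[k] p ((ρk2 i).r j ⊗ₜ[k] h1 a)) := heW
      _ = _ := Finset.sum_congr rfl fun j _ => Finset.sum_congr rfl fun a _ => Wap _ _
  rw [Finset.sum_congr rfl fun i _ => step2 i]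
  -- step 3 : coassociativity transport on kk
  have step3 : ∀ a, (∑ i, ∑ j,
        p (p (l ⊗ₜ[k] ρk.l i) ⊗ₜ[k] d (h2 a ⊗ₜ[k] (ρk2 i).l j)) *
          p ((ρk2 i).r j ⊗ₜ[k] h1 a)) =
      ∑ i, ∑ j, p (p (l ⊗ₜ[k] (ρk1 i).l j) ⊗ₜ[k] d (h2 a ⊗ₜ[k] (ρk1 i).r j)) *
        p (ρk.r i ⊗ₜ[k] h1 a) := by
    intro a
    set Fa : H ⊗[k] (H ⊗[k] H) →ₗ[k] H :=
      LinearMap.mul' k H ∘ₗ TensorProduct.map p LinearMap.id ∘ₗ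
        (TensorProduct.assoc k H H H).symm.toLinearMap ∘ₗ
        TensorProduct.map (p ∘ₗ TensorProduct.mk k H H l)
          (TensorProduct.map (d ∘ₗ TensorProduct.mk k H H (h2 a))
            (p ∘ₗ (TensorProduct.mk k H H).flip (h1 a))) with hFa
    have Faap : ∀ x y z : H, Fa (x ⊗ₜ[k] (y ⊗ₜ[k] z)) =
        p (p (l ⊗ₜ[k] x) ⊗ₜ[k] d (h2 a ⊗ₜ[k] y)) * p (z ⊗ₜ[k] h1 a) := by
      intro x y z
      simp [hFa, LinearMap.mul'_apply]
    have he := congrArg Fa (e3 ρk ρk1 ρk2)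
    simp only [map_sum] at he
    calc (∑ i, ∑ j, p (p (l ⊗ₜ[k] ρk.l i) ⊗ₜ[k] d (h2 a ⊗ₜ[k] (ρk2 i).l j)) *
          p ((ρk2 i).r j ⊗ₜ[k] h1 a))
        = ∑ i, ∑ j, Fa (ρk.l i ⊗ₜ[k] ((ρk2 i).l j ⊗ₜ[k] (ρk2 i).r j)) :=
          Finset.sum_congr rfl fun i _ => Finset.sum_congr rfl fun j _ => (Faap _ _ _).symm
      _ = ∑ i, ∑ j, Fa ((ρk1 i).l j ⊗ₜ[k] ((ρk1 i).r j ⊗ₜ[k] ρk.r i)) := he.symm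
      _ = _ := Finset.sum_congr rfl fun i _ => Finset.sum_congr rfl fun j _ => Faap _ _ _
  -- move the `a` sum outside, apply step3
  rw [show (∑ i, ∑ j, ∑ a,
        p (p (l ⊗ₜ[k] ρk.l i) ⊗ₜ[k] d (h2 a ⊗ₜ[k] (ρk2 i).l j)) *
          p ((ρk2 i).r j ⊗ₜ[k] h1 a)) =
      ∑ a, ∑ i, ∑ j, p (p (l ⊗ₜ[k] ρk.l i) ⊗ₜ[k] d (h2 a ⊗ₜ[k] (ρk2 i).l j)) *
          p ((ρk2 i).r j ⊗ₜ[k] h1 a) from by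
    rw [Finset.sum_comm]
    exact Finset.sum_congr rfl fun a _ => Finset.sum_comm]
  rw [Finset.sum_congr rfl fun a _ => step3 a]
  -- step 4 : first cycle condition
  have step4 : ∀ a i, (∑ j,
        p (p (l ⊗ₜ[k] (ρk1 i).l j) ⊗ₜ[k] d (h2 a ⊗ₜ[k] (ρk1 i).r j)) *
          p (ρk.r i ⊗ₜ[k] h1 a)) =
      ∑ b, p (p (l ⊗ₜ[k] (ρC a).r b) ⊗ₜ[k] p (ρk.l i ⊗ₜ[k] (ρC a).l b)) *
        p (ρk.r i ⊗ₜ[k] h1 a) := by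
    intro a i
    rw [← Finset.sum_mul, ← Finset.sum_mul]
    congr 1
    exact (hcyc l (ρk.l i) (h2 a) (ρk1 i).n (ρC a).n (ρk1 i).l (ρk1 i).r
      (ρC a).l (ρC a).r (ρk1 i).eq (ρC a).eq).1
  rw [Finset.sum_congr rfl fun a _ => Finset.sum_congr rfl fun i _ => step4 a i]
  -- step 5 : expand the right hand side
  have step5 : (∑ a, tmOp k H p (p (kk ⊗ₜ[k] h1 a) ⊗ₜ[k] p (l ⊗ₜ[k] h2 a))) =
      ∑ a, ∑ i, ∑ c, p (p (l ⊗ₜ[k] h2 a) ⊗ₜ[k] p (ρk.l i ⊗ₜ[k] (ρU a).r c)) *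
        p (ρk.r i ⊗ₜ[k] (ρU a).l c) :=
    Finset.sum_congr rfl fun a _ => tm_p_apply hp ρk (ρU a) _
  rw [step5]
  -- step 6 : coassociativity transport on h
  have step6 : ∀ i, (∑ a, ∑ b,
        p (p (l ⊗ₜ[k] (ρC a).r b) ⊗ₜ[k] p (ρk.l i ⊗ₜ[k] (ρC a).l b)) *
          p (ρk.r i ⊗ₜ[k] h1 a)) =
      ∑ a, ∑ c, p (p (l ⊗ₜ[k] h2 a) ⊗ₜ[k] p (ρk.l i ⊗ₜ[k] (ρU a).r c)) *
        p (ρk.r i ⊗ₜ[k] (ρU a).l c) := by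
    intro i
    set Φ : H ⊗[k] (H ⊗[k] H) →ₗ[k] H :=
      LinearMap.mul' k H ∘ₗ (TensorProduct.comm k H H).toLinearMap ∘ₗ
        LinearMap.lTensor H (p ∘ₗ (TensorProduct.comm k H H).toLinearMap) ∘ₗ
        TensorProduct.map (p ∘ₗ TensorProduct.mk k H H (ρk.r i))
          (TensorProduct.map (p ∘ₗ TensorProduct.mk k H H (ρk.l i))
            (p ∘ₗ TensorProduct.mk k H H l)) with hΦ
    have Φap : ∀ x y z : H, Φ (x ⊗ₜ[k] (y ⊗ₜ[k] z)) =
        p (p (l ⊗ₜ[k] z) ⊗ₜ[k] p (ρk.l i ⊗ₜ[k] y)) * p (ρk.r i ⊗ₜ[k] x) := by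
      intro x y z
      simp [hΦ, LinearMap.mul'_apply]
    have he := congrArg Φ (e3' hrep ρU ρC)
    simp only [map_sum] at he
    calc (∑ a, ∑ b, p (p (l ⊗ₜ[k] (ρC a).r b) ⊗ₜ[k] p (ρk.l i ⊗ₜ[k] (ρC a).l b)) *
          p (ρk.r i ⊗ₜ[k] h1 a))
        = ∑ a, ∑ b, Φ (h1 a ⊗ₜ[k] ((ρC a).l b ⊗ₜ[k] (ρC a).r b)) :=
          Finset.sum_congr rfl fun a _ => Finset.sum_congr rfl fun b _ => (Φap _ _ _).symm
      _ = ∑ a, ∑ c, Φ ((ρU a).l c ⊗ₜ[k] ((ρU a).r c ⊗ₜ[k] h2 a)) := he.symm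
      _ = _ := Finset.sum_congr rfl fun a _ => Finset.sum_congr rfl fun c _ => Φap _ _ _
  calc ∑ a, ∑ i, ∑ b,
        p (p (l ⊗ₜ[k] (ρC a).r b) ⊗ₜ[k] p (ρk.l i ⊗ₜ[k] (ρC a).l b)) *
          p (ρk.r i ⊗ₜ[k] h1 a)
      = ∑ i, ∑ a, ∑ b,
        p (p (l ⊗ₜ[k] (ρC a).r b) ⊗ₜ[k] p (ρk.l i ⊗ₜ[k] (ρC a).l b)) *
          p (ρk.r i ⊗ₜ[k] h1 a) := Finset.sum_comm
    _ = ∑ i, ∑ a, ∑ c, p (p (l ⊗ₜ[k] h2 a) ⊗ₜ[k] p (ρk.l i ⊗ₜ[k] (ρU a).r c)) *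
          p (ρk.r i ⊗ₜ[k] (ρU a).l c) := Finset.sum_congr rfl fun i _ => step6 i
    _ = _ := Finset.sum_comm

/-- second bullet: `T ∗ id = ηε` -/
lemma bullet2 (hp : IsCoalgMorCop k H p) (hpm : RightOpModule k H p)
    (hd1 : ∀ x : H, d (x ⊗ₜ[k] (1 : H)) = x)
    (hexch : ExchangeId k H p d) (hcyc : QCycleConds k H p d)
    (hdist : QBraceDistrib k H p d) (Sinv : H →ₗ[k] H)
    (hS1 : HopfAlgebra.antipode (R := k) (A := H) ∘ₗ Sinv = LinearMap.id)
    (hS2 : Sinv ∘ₗ HopfAlgebra.antipode (R := k) (A := H) = LinearMap.id) :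
    tmOp k H p ∘ₗ LinearMap.rTensor H (TOp k H p Sinv) ∘ₗ comulCop k H =
      Algebra.linearMap k H ∘ₗ Coalgebra.counit (R := k) := by
  ext h
  simp only [LinearMap.comp_apply, Algebra.linearMap_apply]
  obtain ρ := finRep (k := k) h
  have ρa := fun i => finRep (k := k) (ρ.l i)
  have ρb := fun i => finRep (k := k) (ρ.r i)
  have ρe := fun i j => finRep (k := k) ((ρb i).r j)
  have ρw := fun i j m => finRep (k := k) ((ρe i j).l m)
  have ρcl := fun i j => finRep (k := k) ((ρb i).l j)
  set S' := HopfAlgebra.antipode (R := k) (A := H) with hS'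
  set T := TOp k H p Sinv with hT
  have pull1 : ∀ (Q z : H) (r : k), p ((r • Q) ⊗ₜ[k] z) = r • p (Q ⊗ₜ[k] z) := by
    intro Q z r; rw [← TensorProduct.smul_tmul', map_smul]
  have pull2 : ∀ (Q z : H) (r : k), r • p (Q ⊗ₜ[k] Sinv z) = p (Q ⊗ₜ[k] Sinv (r • z)) := by
    intro Q z r; rw [map_smul Sinv, TensorProduct.tmul_smul, map_smul]
  -- expand the composite
  rw [comulCop_apply ρ, map_sum, map_sum]
  simp only [rTensor_tmul]
  -- step 1 : insert an S⁻¹-pair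
  have step1 : ∀ i, tmOp k H p (T (ρ.r i) ⊗ₜ[k] ρ.l i) =
      ∑ j, ∑ m, p (p (tmOp k H p (T ((ρb i).l j) ⊗ₜ[k] ρ.l i) ⊗ₜ[k] (ρe i j).l m) ⊗ₜ[k]
        Sinv ((ρe i j).r m)) := by
    intro i
    have hcalc : ∀ j, (∑ m, p (p (tmOp k H p (T ((ρb i).l j) ⊗ₜ[k] ρ.l i) ⊗ₜ[k]
          (ρe i j).l m) ⊗ₜ[k] Sinv ((ρe i j).r m))) =
        Coalgebra.counit (R := k) ((ρb i).r j) •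
          tmOp k H p (T ((ρb i).l j) ⊗ₜ[k] ρ.l i) := by
      intro j
      calc (∑ m, p (p (tmOp k H p (T ((ρb i).l j) ⊗ₜ[k] ρ.l i) ⊗ₜ[k]
              (ρe i j).l m) ⊗ₜ[k] Sinv ((ρe i j).r m)))
          = p (tmOp k H p (T ((ρb i).l j) ⊗ₜ[k] ρ.l i) ⊗ₜ[k]
              (∑ m, Sinv ((ρe i j).r m) * (ρe i j).l m)) := by
            rw [TensorProduct.tmul_sum, map_sum]
            exact Finset.sum_congr rfl fun m _ => by rw [← hpm.2]
        _ = _ := by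
            rw [FinRep.sinv_mul Sinv hS1 hS2 (ρe i j), p_alg hpm.1]
    rw [Finset.sum_congr rfl fun j _ => hcalc j]
    symm
    calc ∑ j, Coalgebra.counit (R := k) ((ρb i).r j) •
          tmOp k H p (T ((ρb i).l j) ⊗ₜ[k] ρ.l i)
        = tmOp k H p (T (∑ j, Coalgebra.counit (R := k) ((ρb i).r j) • (ρb i).l j)
            ⊗ₜ[k] ρ.l i) := by
          rw [map_sum, TensorProduct.sum_tmul, map_sum]
          refine Finset.sum_congr rfl fun j _ => ?_
          rw [map_smul T, ← TensorProduct.smul_tmul', map_smul]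
      _ = _ := by rw [(ρb i).sum_counit_smul_right]
  rw [Finset.sum_congr rfl fun i _ => step1 i]
  -- step 2 : apply bullet3
  have step2 : ∀ i j m, p (tmOp k H p (T ((ρb i).l j) ⊗ₜ[k] ρ.l i) ⊗ₜ[k] (ρe i j).l m) =
      ∑ nn, tmOp k H p (p (T ((ρb i).l j) ⊗ₜ[k] (ρw i j m).l nn) ⊗ₜ[k]
        p (ρ.l i ⊗ₜ[k] (ρw i j m).r nn)) :=
    fun i j m => bullet3 hp hexch hcyc hdist ((ρe i j).l m) (T ((ρb i).l j)) (ρ.l i)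
      (ρw i j m).n (ρw i j m).l (ρw i j m).r (ρw i j m).eq
  -- the transport maps
  have main : ∀ i, (∑ j, ∑ m, p (p (tmOp k H p (T ((ρb i).l j) ⊗ₜ[k] ρ.l i) ⊗ₜ[k]
        (ρe i j).l m) ⊗ₜ[k] Sinv ((ρe i j).r m))) =
      ∑ j, p ((ρ.l i * S' ((ρb i).l j)) ⊗ₜ[k] Sinv ((ρb i).r j)) := by
    intro i
    set L3 : H ⊗[k] (H ⊗[k] (H ⊗[k] H)) →ₗ[k] H :=
      p ∘ₗ TensorProduct.map (tmOp k H p) LinearMap.id ∘ₗ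
        (TensorProduct.assoc k H H H).symm.toLinearMap ∘ₗ
        TensorProduct.map (p ∘ₗ TensorProduct.map T LinearMap.id)
          (TensorProduct.map (p ∘ₗ TensorProduct.mk k H H (ρ.l i)) Sinv) ∘ₗ
        (TensorProduct.assoc k H H (H ⊗[k] H)).symm.toLinearMap with hL3
    have L3ap : ∀ c σ τ z : H, L3 (c ⊗ₜ[k] (σ ⊗ₜ[k] (τ ⊗ₜ[k] z))) =
        p (tmOp k H p (p (T c ⊗ₜ[k] σ) ⊗ₜ[k] p (ρ.l i ⊗ₜ[k] τ)) ⊗ₜ[k] Sinv z) := by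
      intro c σ τ z
      simp [hL3]
    set L4 : H ⊗[k] (H ⊗[k] (H ⊗[k] H)) →ₗ[k] H :=
      p ∘ₗ LinearMap.rTensor H (LinearMap.mul' k H ∘ₗ
          (TensorProduct.comm k H H).toLinearMap ∘ₗ LinearMap.rTensor H S') ∘ₗ
        (TensorProduct.assoc k H H H).symm.toLinearMap ∘ₗ
        lTensor H (TensorProduct.map (p ∘ₗ TensorProduct.mk k H H (ρ.l i) ∘ₗ
          LinearMap.mul' k H ∘ₗ LinearMap.rTensor H S') Sinv) ∘ₗ
        lTensor H (TensorProduct.assoc k H H H).symm.toLinearMap with hL4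
    have L4ap : ∀ g dd c e : H, L4 (g ⊗ₜ[k] (dd ⊗ₜ[k] (c ⊗ₜ[k] e))) =
        p ((p (ρ.l i ⊗ₜ[k] (S' dd * c)) * S' g) ⊗ₜ[k] Sinv e) := by
      intro g dd c e
      simp [hL4, LinearMap.mul'_apply]
    -- value in TE shape
    have v1 : (∑ j, ∑ m, p (p (tmOp k H p (T ((ρb i).l j) ⊗ₜ[k] ρ.l i) ⊗ₜ[k]
          (ρe i j).l m) ⊗ₜ[k] Sinv ((ρe i j).r m))) =
        ∑ j, ∑ m, ∑ nn, L3 ((ρb i).l j ⊗ₜ[k] ((ρw i j m).l nn ⊗ₜ[k]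
          ((ρw i j m).r nn ⊗ₜ[k] (ρe i j).r m))) := by
      refine Finset.sum_congr rfl fun j _ => Finset.sum_congr rfl fun m _ => ?_
      rw [step2 i j m, TensorProduct.sum_tmul, map_sum]
      exact Finset.sum_congr rfl fun nn _ => by rw [L3ap]
    rw [v1]
    -- transport TE (=TB) to TA
    have t1 := (eTB (ρb i) (ρe i) (ρw i)).trans (eTA (ρb i) (ρcl i) (ρe i)).symm
    have ht1 := congrArg L3 t1
    simp only [map_sum] at ht1
    rw [ht1]
    -- collapse with lemA, re-expand with tm_apply, module law
    have v2 : ∀ j, (∑ nn, ∑ m, L3 ((ρcl i j).l nn ⊗ₜ[k] ((ρcl i j).r nn ⊗ₜ[k]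
          ((ρe i j).l m ⊗ₜ[k] (ρe i j).r m)))) =
        ∑ m, ∑ nn, L4 ((ρcl i j).l nn ⊗ₜ[k] ((ρcl i j).r nn ⊗ₜ[k]
          ((ρe i j).l m ⊗ₜ[k] (ρe i j).r m))) := by
      intro j
      rw [Finset.sum_comm]
      refine Finset.sum_congr rfl fun m _ => ?_
      calc (∑ nn, L3 ((ρcl i j).l nn ⊗ₜ[k] ((ρcl i j).r nn ⊗ₜ[k]
            ((ρe i j).l m ⊗ₜ[k] (ρe i j).r m))))
          = p (tmOp k H p ((∑ nn, p (T ((ρcl i j).l nn) ⊗ₜ[k] (ρcl i j).r nn)) ⊗ₜ[k]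
              p (ρ.l i ⊗ₜ[k] (ρe i j).l m)) ⊗ₜ[k] Sinv ((ρe i j).r m)) := by
            rw [TensorProduct.sum_tmul, map_sum, TensorProduct.sum_tmul, map_sum]
            exact Finset.sum_congr rfl fun nn _ => by rw [L3ap]
        _ = p (tmOp k H p (S' ((ρb i).l j) ⊗ₜ[k]
              p (ρ.l i ⊗ₜ[k] (ρe i j).l m)) ⊗ₜ[k] Sinv ((ρe i j).r m)) := by
            rw [lemA hpm Sinv hS1 hS2 (ρcl i j)]
        _ = ∑ nn, L4 ((ρcl i j).l nn ⊗ₜ[k] ((ρcl i j).r nn ⊗ₜ[k]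
              ((ρe i j).l m ⊗ₜ[k] (ρe i j).r m))) := by
            rw [tm_apply p (FinRep.srep (ρcl i j))]
            rw [TensorProduct.sum_tmul, map_sum]
            refine Finset.sum_congr rfl fun nn _ => ?_
            rw [L4ap, ← hpm.2]
            rfl
    rw [Finset.sum_congr rfl fun j _ => v2 j]
    -- transport TA back to TB and collapse
    have t2 := (eTA (ρb i) (ρcl i) (ρe i)).trans (eTB (ρb i) (ρe i) (ρw i)).symm
    have ht2' : ∀ j, (∑ m, ∑ nn, L4 ((ρcl i j).l nn ⊗ₜ[k] ((ρcl i j).r nn ⊗ₜ[k]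
        ((ρe i j).l m ⊗ₜ[k] (ρe i j).r m)))) =
        ∑ nn, ∑ m, L4 ((ρcl i j).l nn ⊗ₜ[k] ((ρcl i j).r nn ⊗ₜ[k]
        ((ρe i j).l m ⊗ₜ[k] (ρe i j).r m))) := fun j => Finset.sum_comm
    rw [Finset.sum_congr rfl fun j _ => ht2' j]
    have ht2 := congrArg L4 t2
    simp only [map_sum] at ht2
    rw [ht2]
    refine Finset.sum_congr rfl fun j _ => ?_
    calc (∑ m, ∑ nn, L4 ((ρb i).l j ⊗ₜ[k] ((ρw i j m).l nn ⊗ₜ[k]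
          ((ρw i j m).r nn ⊗ₜ[k] (ρe i j).r m))))
        = ∑ m, Coalgebra.counit (R := k) ((ρe i j).l m) •
            p ((ρ.l i * S' ((ρb i).l j)) ⊗ₜ[k] Sinv ((ρe i j).r m)) := by
          refine Finset.sum_congr rfl fun m _ => ?_
          calc (∑ nn, L4 ((ρb i).l j ⊗ₜ[k] ((ρw i j m).l nn ⊗ₜ[k]
                ((ρw i j m).r nn ⊗ₜ[k] (ρe i j).r m))))
              = p ((p (ρ.l i ⊗ₜ[k] (∑ nn, S' ((ρw i j m).l nn) * (ρw i j m).r nn)) *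
                  S' ((ρb i).l j)) ⊗ₜ[k] Sinv ((ρe i j).r m)) := by
                rw [TensorProduct.tmul_sum, map_sum, Finset.sum_mul,
                  TensorProduct.sum_tmul, map_sum]
                exact Finset.sum_congr rfl fun nn _ => by rw [L4ap]
            _ = _ := by
                rw [(ρw i j m).antipode_mul, p_alg hpm.1, smul_mul_assoc, pull1]
      _ = p ((ρ.l i * S' ((ρb i).l j)) ⊗ₜ[k] Sinv ((ρb i).r j)) := by
          rw [Finset.sum_congr rfl fun m _ => pull2 _ _ _]
          rw [show (∑ m, p ((ρ.l i * S' ((ρb i).l j)) ⊗ₜ[k]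
              Sinv (Coalgebra.counit (R := k) ((ρe i j).l m) • (ρe i j).r m))) =
            p ((ρ.l i * S' ((ρb i).l j)) ⊗ₜ[k]
              Sinv (∑ m, Coalgebra.counit (R := k) ((ρe i j).l m) • (ρe i j).r m)) from by
            rw [map_sum Sinv, TensorProduct.tmul_sum, map_sum]]
          rw [(ρe i j).sum_counit_smul_left]
  rw [Finset.sum_congr rfl fun i _ => main i]
  -- final : three-leg transport on h and `p_one`
  set Ψ : H ⊗[k] (H ⊗[k] H) →ₗ[k] H :=
    p ∘ₗ TensorProduct.map (LinearMap.mul' k H ∘ₗ lTensor H S') Sinv ∘ₗ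
      (TensorProduct.assoc k H H H).symm.toLinearMap with hΨ
  have Ψap : ∀ x y z : H, Ψ (x ⊗ₜ[k] (y ⊗ₜ[k] z)) =
      p ((x * S' y) ⊗ₜ[k] Sinv z) := by
    intro x y z
    simp [hΨ, LinearMap.mul'_apply]
  have hfin : (∑ i, ∑ j, p ((ρ.l i * S' ((ρb i).l j)) ⊗ₜ[k] Sinv ((ρb i).r j))) =
      ∑ i, ∑ j, p (((ρa i).l j * S' ((ρa i).r j)) ⊗ₜ[k] Sinv (ρ.r i)) := by
    have he := congrArg Ψ (e3 ρ ρa ρb)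
    simp only [map_sum] at he
    calc (∑ i, ∑ j, p ((ρ.l i * S' ((ρb i).l j)) ⊗ₜ[k] Sinv ((ρb i).r j)))
        = ∑ i, ∑ j, Ψ (ρ.l i ⊗ₜ[k] ((ρb i).l j ⊗ₜ[k] (ρb i).r j)) :=
          Finset.sum_congr rfl fun i _ => Finset.sum_congr rfl fun j _ => (Ψap _ _ _).symm
      _ = ∑ i, ∑ j, Ψ ((ρa i).l j ⊗ₜ[k] ((ρa i).r j ⊗ₜ[k] ρ.r i)) := he.symm
      _ = _ := Finset.sum_congr rfl fun i _ => Finset.sum_congr rfl fun j _ => Ψap _ _ _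
  rw [hfin]
  calc (∑ i, ∑ j, p (((ρa i).l j * S' ((ρa i).r j)) ⊗ₜ[k] Sinv (ρ.r i)))
      = ∑ i, Coalgebra.counit (R := k) (ρ.l i) • p ((1 : H) ⊗ₜ[k] Sinv (ρ.r i)) := by
        refine Finset.sum_congr rfl fun i _ => ?_
        rw [← map_sum, ← TensorProduct.sum_tmul, (ρa i).mul_antipode,
          Algebra.algebraMap_eq_smul_one, ← TensorProduct.smul_tmul', map_smul]
    _ = p ((1 : H) ⊗ₜ[k] Sinv (∑ i, Coalgebra.counit (R := k) (ρ.l i) • ρ.r i)) := by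
        rw [map_sum Sinv, TensorProduct.tmul_sum, map_sum]
        exact Finset.sum_congr rfl fun i _ => pull2 _ _ _
    _ = p ((1 : H) ⊗ₜ[k] Sinv h) := by rw [ρ.sum_counit_smul_left]
    _ = algebraMap k H (Coalgebra.counit (R := k) h) := by
        rw [p_one hp hd1 hdist Sinv hS1 hS2, counit_Sinv Sinv hS1]

end PD

end Stmt14Aux

/-- `T_×` is the convolution inverse of the identity with respect to
`(Δ^cop, ×)`, and `(k×l)·h = (k·h₍₁₎) × (l·h₍₂₎)`. -/
theorem stmt_14 (p d : H ⊗[k] H →ₗ[k] H) (hpd : IsHopfQBrace k H p d)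
    (Sinv : H →ₗ[k] H)
    (hS1 : HopfAlgebra.antipode (R := k) (A := H) ∘ₗ Sinv = LinearMap.id)
    (hS2 : Sinv ∘ₗ HopfAlgebra.antipode (R := k) (A := H) = LinearMap.id) :
    (tmOp k H p ∘ₗ LinearMap.lTensor H (TOp k H p Sinv) ∘ₗ comulCop k H =
      Algebra.linearMap k H ∘ₗ Coalgebra.counit (R := k)) ∧
    (tmOp k H p ∘ₗ LinearMap.rTensor H (TOp k H p Sinv) ∘ₗ comulCop k H =
      Algebra.linearMap k H ∘ₗ Coalgebra.counit (R := k)) ∧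
    (∀ (h kk l : H) (n : ℕ) (h1 h2 : Fin n → H),
      (∑ i, h1 i ⊗ₜ[k] h2 i) = Coalgebra.comul (R := k) h →
      p (tmOp k H p (kk ⊗ₜ[k] l) ⊗ₜ[k] h) =
        ∑ i, tmOp k H p (p (kk ⊗ₜ[k] h1 i) ⊗ₜ[k] p (l ⊗ₜ[k] h2 i))) := by
  obtain ⟨hp, hd, hexch, -, -, hcyc, hpm, hdm, hdist⟩ := hpd
  exact ⟨Stmt14Aux.bullet1 hpm Sinv hS1 hS2,
    Stmt14Aux.bullet2 hp hpm hdm.1 hexch hcyc hdist Sinv hS1 hS2,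
    fun h kk l n h1 h2 hrep =>
      Stmt14Aux.bullet3 hp hexch hcyc hdist h kk l n h1 h2 hrep⟩

end
end

section
/- Let ℋ = (H; ·, ⊥) be a Hopf q-brace with bijective antipode. Then for all h,k ∈ H: k·(S(h_(1))·S^{-1}(h_(2))) = k·(S^{-1}(h_(2)) ⊥ S(h_(1))) and k⊥(S^{-1}(h_(2)) ⊥ S(h_(1))) = k⊥(S(h_(1))·S^{-1}(h_(2))). -/
open TensorProduct

noncomputable section

variable (k : Type) [Field k] (X : Type) [AddCommGroup X] [Module k X] [Coalgebra k X]

variable (H : Type) [Ring H] [HopfAlgebra k H]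

/-- the map `h ↦ S⁻¹(h₍₂₎) ⊥ S(h₍₁₎)` -/
def TOp' (d : H ⊗[k] H →ₗ[k] H) (Sinv : H →ₗ[k] H) : H →ₗ[k] H :=
  d ∘ₗ TensorProduct.map Sinv (HopfAlgebra.antipode (R := k) (A := H)) ∘ₗ
    comulCop k H


/-! ### Auxiliary material for `stmt_15` -/

theorem exists_fin_rep (t : H ⊗[k] H) : ∃ (n : ℕ) (f g : Fin n → H),
    (∑ i, f i ⊗ₜ[k] g i) = t := by
  induction t with
  | zero => exact ⟨0, ![], ![], by simp⟩
  | tmul x y => exact ⟨1, ![x], ![y], by simp⟩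
  | add x y hx hy =>
    obtain ⟨n, f, g, hfg⟩ := hx
    obtain ⟨m, f', g', hfg'⟩ := hy
    refine ⟨n + m, Fin.append f f', Fin.append g g', ?_⟩
    rw [Fin.sum_univ_add]
    simp [Fin.append, Fin.addCases, hfg, hfg']

/-- A Sweedler representation of `comul a` with `Fin`-indexing. -/
structure SwRep (a : H) : Type where
  n : ℕ
  l : Fin n → H
  r : Fin n → H
  eq : (∑ i, l i ⊗ₜ[k] r i) = Coalgebra.comul (R := k) a

section Aux

variable {k H}

local notation "ε'" => Coalgebra.counit (R := k) (A := H)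
local notation "Δ'" => Coalgebra.comul (R := k) (A := H)
local notation "𝒮" => HopfAlgebra.antipode (R := k) (A := H)

noncomputable def SwRep.some (a : H) : SwRep k H a := by
  choose n f g hfg using exists_fin_rep k H (Coalgebra.comul (R := k) a)
  exact ⟨n, f, g, hfg⟩

def SwRep.toRepr {a : H} (R : SwRep k H a) : Coalgebra.Repr k a (Fin R.n) :=
  ⟨(Finset.univ : Finset (Fin R.n)), R.l, R.r, R.eq⟩

lemma SwRep.sum_counit_smul_left {a : H} (R : SwRep k H a) :
    ∑ i, ε' (R.l i) • R.r i = a := by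
  have h := Coalgebra.sum_counit_tmul_eq (R := k) R.toRepr
  have := congrArg (TensorProduct.lid k H) h
  simpa [map_sum, SwRep.toRepr] using this

lemma SwRep.sum_counit_smul_right {a : H} (R : SwRep k H a) :
    ∑ i, ε' (R.r i) • R.l i = a := by
  have h := Coalgebra.sum_tmul_counit_eq (R := k) R.toRepr
  have := congrArg (TensorProduct.rid k H) h
  simpa [map_sum, SwRep.toRepr] using this

lemma SwRep.sum_antipode_mul {a : H} (R : SwRep k H a) :
    ∑ i, 𝒮 (R.l i) * R.r i = ε' a • 1 := by
  simpa [SwRep.toRepr] using HopfAlgebra.sum_antipode_mul_eq_smul (R := k) R.toRepr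

lemma SwRep.sum_mul_antipode {a : H} (R : SwRep k H a) :
    ∑ i, R.l i * 𝒮 (R.r i) = ε' a • 1 := by
  simpa [SwRep.toRepr] using HopfAlgebra.sum_mul_antipode_eq_smul (R := k) R.toRepr

lemma counit_antipode (a : H) : ε' (𝒮 a) = ε' a := by
  have R : SwRep k H a := SwRep.some a
  have h1 := congrArg ε' (R.sum_antipode_mul)
  simp only [map_sum, Bialgebra.counit_mul, map_smul, Bialgebra.counit_one, smul_eq_mul,
    mul_one] at h1
  have h2 := congrArg (fun x => ε' (𝒮 x)) (R.sum_counit_smul_right)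
  simp only [map_sum, map_smul, smul_eq_mul] at h2
  rw [← h2, ← h1]
  apply Finset.sum_congr rfl
  intro i _
  ring

lemma tri_coassoc {a : H} (R : SwRep k H a) (RL : ∀ i, SwRep k H (R.l i))
    (RR : ∀ i, SwRep k H (R.r i)) :
    (∑ i, ∑ j, (RL i).l j ⊗ₜ[k] ((RL i).r j ⊗ₜ[k] R.r i)) =
      ∑ i, ∑ j, R.l i ⊗ₜ[k] ((RR i).l j ⊗ₜ[k] (RR i).r j) := by
  simpa [SwRep.toRepr] using
    Coalgebra.sum_tmul_tmul_eq (R := k) R.toRepr (fun i => (RL i).toRepr)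
      (fun i => (RR i).toRepr)

/-- `tauS a = ∑ 𝒮 a₍₂₎ ⊗ 𝒮 a₍₁₎` -/
noncomputable def tauS : H →ₗ[k] H ⊗[k] H :=
  TensorProduct.map 𝒮 𝒮 ∘ₗ (TensorProduct.comm k H H).toLinearMap ∘ₗ
    Coalgebra.comul (R := k)

/-- `gaS m = ∑ tauS (m₍₁₎) * Δ (m₍₂₎)` -/
noncomputable def gaS : H →ₗ[k] H ⊗[k] H :=
  LinearMap.mul' k (H ⊗[k] H) ∘ₗ TensorProduct.map (tauS) (Coalgebra.comul (R := k)) ∘ₗ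
    Coalgebra.comul (R := k)

lemma gaS_eq (m : H) : gaS m = ε' m • (1 : H ⊗[k] H) := by
  set R : SwRep k H m := SwRep.some m with hR
  set Ru : ∀ i, SwRep k H (R.l i) := fun i => SwRep.some _ with hRu
  set Rv : ∀ i, SwRep k H (R.r i) := fun i => SwRep.some _ with hRv
  set R3 : ∀ i j, SwRep k H ((Ru i).l j) := fun i j => SwRep.some _ with hR3
  set Rq : ∀ i j, SwRep k H ((Ru i).r j) := fun i j => SwRep.some _ with hRq
  set g : H ⊗[k] H →ₗ[k] H := LinearMap.mul' k H ∘ₗ TensorProduct.map 𝒮 LinearMap.id with hg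
  set Fh : (H ⊗[k] H) ⊗[k] (H ⊗[k] H) →ₗ[k] H ⊗[k] H :=
    TensorProduct.map g g ∘ₗ (tensorTensorTensorComm k H H H H).toLinearMap ∘ₗ
      LinearMap.rTensor (H ⊗[k] H) (TensorProduct.comm k H H).toLinearMap with hF
  set Kh : H ⊗[k] (H ⊗[k] H) →ₗ[k] H ⊗[k] H :=
    Fh ∘ₗ LinearMap.rTensor (H ⊗[k] H) (Coalgebra.comul (R := k)) with hK
  have hFapp : ∀ b ω c e : H, Fh ((b ⊗ₜ[k] ω) ⊗ₜ[k] (c ⊗ₜ[k] e)) =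
      (𝒮 ω * c) ⊗ₜ[k] (𝒮 b * e) := by
    intro b ω c e
    simp [hF, hg, tensorTensorTensorComm_tmul]
  have hKapp : ∀ (x : H) (t : H ⊗[k] H), Kh (x ⊗ₜ[k] t) = Fh (Δ' x ⊗ₜ[k] t) := by
    intro x t; simp [hK]
  have mulTau : ∀ (x : H) (t : H ⊗[k] H),
      LinearMap.mul' k (H ⊗[k] H) (tauS x ⊗ₜ[k] t) = Fh (Δ' x ⊗ₜ[k] t) := by
    intro x t
    induction t with
    | zero => simp
    | add s t hs ht => rw [tmul_add, tmul_add, map_add, map_add, hs, ht]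
    | tmul c e =>
      set Rx : SwRep k H x := SwRep.some x with hRx
      rw [tauS]
      simp only [LinearMap.comp_apply, LinearEquiv.coe_coe]
      rw [← Rx.eq]
      simp only [map_sum, comm_tmul, map_tmul, sum_tmul, LinearMap.mul'_apply]
      apply Finset.sum_congr rfl
      intro j _
      rw [hFapp]
      simp [Algebra.TensorProduct.tmul_mul_tmul]
  have stepA : gaS m = ∑ i, ∑ j, Kh (R.l i ⊗ₜ[k] ((Rv i).l j ⊗ₜ[k] (Rv i).r j)) := by
    rw [gaS, LinearMap.comp_apply, LinearMap.comp_apply, ← R.eq]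
    rw [map_sum, map_sum]
    apply Finset.sum_congr rfl
    intro i _
    rw [map_tmul, mulTau, ← hKapp, ← (Rv i).eq, tmul_sum, map_sum]
  have stepC : (∑ i, ∑ j, Kh (R.l i ⊗ₜ[k] ((Rv i).l j ⊗ₜ[k] (Rv i).r j))) =
      ∑ i, ∑ j, Kh ((Ru i).l j ⊗ₜ[k] ((Ru i).r j ⊗ₜ[k] R.r i)) := by
    have h := tri_coassoc R Ru Rv
    have := congrArg Kh h
    simpa [map_sum] using this.symm
  rw [stepA, stepC]
  have stepD : ∀ i, (∑ j, Kh ((Ru i).l j ⊗ₜ[k] ((Ru i).r j ⊗ₜ[k] R.r i))) =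
      ∑ j, ∑ l, (𝒮 ((Rq i j).l l) * (Rq i j).r l) ⊗ₜ[k] (𝒮 ((Ru i).l j) * R.r i) := by
    intro i
    set f : H →ₗ[k] H := LinearMap.mul' k H ∘ₗ ((TensorProduct.mk k H H).flip (R.r i)) ∘ₗ 𝒮
      with hf
    set Phi : H ⊗[k] (H ⊗[k] H) →ₗ[k] H ⊗[k] H :=
      TensorProduct.map g f ∘ₗ (TensorProduct.comm k H (H ⊗[k] H)).toLinearMap with hPhi
    have hPhiApp : ∀ b1 b2 ω : H, Phi (b1 ⊗ₜ[k] (b2 ⊗ₜ[k] ω)) =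
        (𝒮 b2 * ω) ⊗ₜ[k] (𝒮 b1 * R.r i) := by
      intro b1 b2 ω
      simp [hPhi, hf, hg]
    have expand : ∀ j, Kh ((Ru i).l j ⊗ₜ[k] ((Ru i).r j ⊗ₜ[k] R.r i)) =
        ∑ l, Phi ((R3 i j).l l ⊗ₜ[k] ((R3 i j).r l ⊗ₜ[k] (Ru i).r j)) := by
      intro j
      rw [hKapp, ← (R3 i j).eq, sum_tmul, map_sum]
      apply Finset.sum_congr rfl
      intro l _
      rw [hFapp, hPhiApp]
    calc (∑ j, Kh ((Ru i).l j ⊗ₜ[k] ((Ru i).r j ⊗ₜ[k] R.r i)))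
        = ∑ j, ∑ l, Phi ((R3 i j).l l ⊗ₜ[k] ((R3 i j).r l ⊗ₜ[k] (Ru i).r j)) := by
          exact Finset.sum_congr rfl fun j _ => expand j
      _ = ∑ j, ∑ l, Phi ((Ru i).l j ⊗ₜ[k] ((Rq i j).l l ⊗ₜ[k] (Rq i j).r l)) := by
          have h := tri_coassoc (Ru i) (R3 i) (Rq i)
          have := congrArg Phi h
          simpa [map_sum] using this
      _ = ∑ j, ∑ l, (𝒮 ((Rq i j).l l) * (Rq i j).r l) ⊗ₜ[k] (𝒮 ((Ru i).l j) * R.r i) := by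
          exact Finset.sum_congr rfl fun j _ => Finset.sum_congr rfl fun l _ => hPhiApp _ _ _
  calc (∑ i, ∑ j, Kh ((Ru i).l j ⊗ₜ[k] ((Ru i).r j ⊗ₜ[k] R.r i)))
      = ∑ i, ∑ j, ∑ l, (𝒮 ((Rq i j).l l) * (Rq i j).r l) ⊗ₜ[k] (𝒮 ((Ru i).l j) * R.r i) := by
        exact Finset.sum_congr rfl fun i _ => stepD i
    _ = ∑ i, ∑ j, (ε' ((Ru i).r j) • (1:H)) ⊗ₜ[k] (𝒮 ((Ru i).l j) * R.r i) := by
        apply Finset.sum_congr rfl; intro i _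
        apply Finset.sum_congr rfl; intro j _
        rw [← sum_tmul, (Rq i j).sum_antipode_mul]
    _ = ∑ i, (1:H) ⊗ₜ[k] (𝒮 (∑ j, ε' ((Ru i).r j) • (Ru i).l j) * R.r i) := by
        apply Finset.sum_congr rfl; intro i _
        rw [map_sum, Finset.sum_mul, tmul_sum]
        apply Finset.sum_congr rfl; intro j _
        rw [smul_tmul, map_smul, smul_mul_assoc]
    _ = (1:H) ⊗ₜ[k] ∑ i, 𝒮 (R.l i) * R.r i := by
        rw [tmul_sum]
        exact Finset.sum_congr rfl fun i _ => by rw [(Ru i).sum_counit_smul_right]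
    _ = ε' m • (1 : H ⊗[k] H) := by
        rw [R.sum_antipode_mul, tmul_smul, Algebra.TensorProduct.one_def]

lemma comul_antipode (a : H) : Δ' (𝒮 a) = tauS a := by
  set R : SwRep k H a := SwRep.some a with hR
  set Rx : ∀ i, SwRep k H (R.l i) := fun i => SwRep.some _ with hRx
  set Ry : ∀ i, SwRep k H (R.r i) := fun i => SwRep.some _ with hRy
  set Psi : H ⊗[k] (H ⊗[k] H) →ₗ[k] H ⊗[k] H :=
    LinearMap.mul' k (H ⊗[k] H) ∘ₗ
      TensorProduct.map tauS
        (Coalgebra.comul (R := k) ∘ₗ LinearMap.mul' k H ∘ₗ LinearMap.lTensor H 𝒮) with hPsi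
  have hPsiApp : ∀ u v w : H, Psi (u ⊗ₜ[k] (v ⊗ₜ[k] w)) = tauS u * Δ' (v * 𝒮 w) := by
    intro u v w; simp [hPsi]
  calc Δ' (𝒮 a)
      = ∑ i, ε' (R.l i) • Δ' (𝒮 (R.r i)) := by
        conv_lhs => rw [← R.sum_counit_smul_left]
        rw [map_sum, map_sum]
        simp only [map_smul]
    _ = ∑ i, gaS (R.l i) * Δ' (𝒮 (R.r i)) := by
        apply Finset.sum_congr rfl; intro i _
        rw [gaS_eq, smul_mul_assoc, one_mul]
    _ = ∑ i, ∑ j, Psi ((Rx i).l j ⊗ₜ[k] ((Rx i).r j ⊗ₜ[k] R.r i)) := by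
        apply Finset.sum_congr rfl; intro i _
        rw [gaS, LinearMap.comp_apply, LinearMap.comp_apply, ← (Rx i).eq, map_sum, map_sum,
          Finset.sum_mul]
        apply Finset.sum_congr rfl; intro j _
        rw [hPsiApp, map_tmul, LinearMap.mul'_apply]
        rw [Bialgebra.comul_mul, ← mul_assoc]
    _ = ∑ i, ∑ j, Psi (R.l i ⊗ₜ[k] ((Ry i).l j ⊗ₜ[k] (Ry i).r j)) := by
        have h := tri_coassoc R Rx Ry
        have := congrArg Psi h
        simpa [map_sum] using this
    _ = ∑ i, ε' (R.r i) • tauS (R.l i) := by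
        apply Finset.sum_congr rfl; intro i _
        simp only [hPsiApp]
        rw [← Finset.mul_sum, ← map_sum, (Ry i).sum_mul_antipode]
        rw [map_smul, Bialgebra.comul_one, mul_smul_comm, mul_one]
    _ = tauS (∑ i, ε' (R.r i) • R.l i) := by
        rw [map_sum]; simp only [map_smul]
    _ = tauS a := congrArg tauS R.sum_counit_smul_right

section SinvLemmas

variable {Sinv : H →ₗ[k] H}
variable (hS1 : HopfAlgebra.antipode (R := k) (A := H) ∘ₗ Sinv = LinearMap.id)
variable (hS2 : Sinv ∘ₗ HopfAlgebra.antipode (R := k) (A := H) = LinearMap.id)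

set_option linter.unusedSectionVars false

include hS1 hS2

lemma sinv_apply_antipode (x : H) : 𝒮 (Sinv x) = x := by
  have := LinearMap.congr_fun hS1 x; simpa using this

lemma antipode_apply_sinv (x : H) : Sinv (𝒮 x) = x := by
  have := LinearMap.congr_fun hS2 x; simpa using this

lemma counit_sinv (a : H) : ε' (Sinv a) = ε' a := by
  conv_rhs => rw [← sinv_apply_antipode hS1 hS2 a, counit_antipode]

lemma comul_sinv (a : H) :
    Δ' (Sinv a) = TensorProduct.map Sinv Sinv ((TensorProduct.comm k H H) (Δ' a)) := by
  have h : Δ' a = TensorProduct.map 𝒮 𝒮 ((TensorProduct.comm k H H) (Δ' (Sinv a))) := by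
    have h0 := comul_antipode (k := k) (Sinv a)
    rw [sinv_apply_antipode hS1 hS2 a] at h0
    rw [h0, tauS]
    simp
  have key : ∀ X : H ⊗[k] H,
      TensorProduct.map Sinv Sinv
        ((TensorProduct.comm k H H) (TensorProduct.map 𝒮 𝒮 ((TensorProduct.comm k H H) X))) =
        X := by
    intro X
    induction X with
    | zero => simp
    | add s t hs ht => simp only [map_add, hs, ht]
    | tmul x y => simp [antipode_apply_sinv hS1 hS2]
  rw [h, key]

omit hS1 hS2

/-- representation of `Δ (𝒮 a)` -/
lemma anti_eq {a : H} (R : SwRep k H a) :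
    (∑ i, 𝒮 (R.r i) ⊗ₜ[k] 𝒮 (R.l i)) = Δ' (𝒮 a) := by
  rw [comul_antipode, tauS]
  simp only [LinearMap.comp_apply, LinearEquiv.coe_coe]
  rw [← R.eq]
  simp [map_sum]

include hS1 hS2

/-- representation of `Δ (Sinv a)` -/
lemma sinv_eq {a : H} (R : SwRep k H a) :
    (∑ i, Sinv (R.r i) ⊗ₜ[k] Sinv (R.l i)) = Δ' (Sinv a) := by
  rw [comul_sinv hS1 hS2, ← R.eq]
  simp [map_sum]

lemma SwRep.sum_sinv_mul {a : H} (R : SwRep k H a) :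
    ∑ i, Sinv (R.r i) * R.l i = ε' a • 1 := by
  have h := SwRep.sum_mul_antipode (a := Sinv a)
    ⟨R.n, fun i => Sinv (R.r i), fun i => Sinv (R.l i), sinv_eq hS1 hS2 R⟩
  simp only at h
  simp only [sinv_apply_antipode hS1 hS2] at h
  rw [h, counit_sinv hS1 hS2]

end SinvLemmas

end Aux

/-- `k·(S(h₍₁₎)·S⁻¹(h₍₂₎)) = k·(S⁻¹(h₍₂₎)⊥S(h₍₁₎))` and
`k⊥(S⁻¹(h₍₂₎)⊥S(h₍₁₎)) = k⊥(S(h₍₁₎)·S⁻¹(h₍₂₎))`. -/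
theorem stmt_15 (p d : H ⊗[k] H →ₗ[k] H) (hpd : IsHopfQBrace k H p d)
    (Sinv : H →ₗ[k] H)
    (hS1 : HopfAlgebra.antipode (R := k) (A := H) ∘ₗ Sinv = LinearMap.id)
    (hS2 : Sinv ∘ₗ HopfAlgebra.antipode (R := k) (A := H) = LinearMap.id) :
    ∀ h kk : H,
      p (kk ⊗ₜ[k] TOp k H p Sinv h) = p (kk ⊗ₜ[k] TOp' k H d Sinv h) ∧
      d (kk ⊗ₜ[k] TOp' k H d Sinv h) = d (kk ⊗ₜ[k] TOp k H p Sinv h) := by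
  classical
  intro h kk
  have qc : QCycleConds k H p d := hpd.2.2.2.2.2.1
  have modp : RightOpModule k H p := hpd.2.2.2.2.2.2.1
  have modd : RightOpModule k H d := hpd.2.2.2.2.2.2.2.1
  set R : SwRep k H h := SwRep.some h with hR
  set RT : ∀ i, SwRep k H (R.l i) := fun i => SwRep.some _ with hRT
  set RA : ∀ i, SwRep k H (R.r i) := fun i => SwRep.some _ with hRA
  set RB : ∀ i j, SwRep k H ((RT i).l j) := fun i j => SwRep.some _ with hRB
  set RW : ∀ i j, SwRep k H ((RT i).r j) := fun i j => SwRep.some _ with hRW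
  set S := HopfAlgebra.antipode (R := k) (A := H) with hS
  have hTOp : TOp k H p Sinv h = ∑ i, p (S (R.l i) ⊗ₜ[k] Sinv (R.r i)) := by
    rw [TOp]
    simp only [LinearMap.comp_apply]
    rw [← R.eq, map_sum, map_sum]
    simp only [map_tmul, hS]
  have hTOp' : TOp' k H d Sinv h = ∑ i, d (Sinv (R.r i) ⊗ₜ[k] S (R.l i)) := by
    rw [TOp', comulCop]
    simp only [LinearMap.comp_apply, LinearEquiv.coe_coe]
    rw [← R.eq, map_sum, map_sum, map_sum]
    simp only [comm_tmul, map_tmul, hS]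
  -- Elem1
  have elem1 : (∑ i, ∑ j, ∑ l,
      d (Sinv (R.r i) ⊗ₜ[k] S ((RB i j).l l)) * (S ((RB i j).r l) * (RT i).r j)) =
      TOp' k H d Sinv h := by
    rw [hTOp']
    apply Finset.sum_congr rfl; intro i _
    set g : H ⊗[k] H →ₗ[k] H :=
      LinearMap.mul' k H ∘ₗ TensorProduct.map S LinearMap.id with hg
    set f : H →ₗ[k] H :=
      d ∘ₗ (TensorProduct.mk k H H (Sinv (R.r i))) ∘ₗ S with hf
    set Phi : H ⊗[k] (H ⊗[k] H) →ₗ[k] H := LinearMap.mul' k H ∘ₗ TensorProduct.map f g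
      with hPhi
    have hPhiApp : ∀ b1 b2 ω : H, Phi (b1 ⊗ₜ[k] (b2 ⊗ₜ[k] ω)) =
        d (Sinv (R.r i) ⊗ₜ[k] S b1) * (S b2 * ω) := by
      intro b1 b2 ω; simp [hPhi, hf, hg]
    calc (∑ j, ∑ l,
        d (Sinv (R.r i) ⊗ₜ[k] S ((RB i j).l l)) * (S ((RB i j).r l) * (RT i).r j))
        = ∑ j, ∑ l, Phi ((RB i j).l l ⊗ₜ[k] ((RB i j).r l ⊗ₜ[k] (RT i).r j)) := by
          exact Finset.sum_congr rfl fun j _ => Finset.sum_congr rfl fun l _ =>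
            (hPhiApp _ _ _).symm
      _ = ∑ j, ∑ l, Phi ((RT i).l j ⊗ₜ[k] ((RW i j).l l ⊗ₜ[k] (RW i j).r l)) := by
          have := congrArg Phi (tri_coassoc (RT i) (RB i) (RW i))
          simpa [map_sum] using this
      _ = ∑ j, d (Sinv (R.r i) ⊗ₜ[k] S ((RT i).l j)) *
            (∑ l, S ((RW i j).l l) * (RW i j).r l) := by
          apply Finset.sum_congr rfl; intro j _
          rw [Finset.mul_sum]
          exact Finset.sum_congr rfl fun l _ => hPhiApp _ _ _
      _ = ∑ j, Coalgebra.counit (R := k) ((RT i).r j) •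
            d (Sinv (R.r i) ⊗ₜ[k] S ((RT i).l j)) := by
          apply Finset.sum_congr rfl; intro j _
          rw [hS, (RW i j).sum_antipode_mul, mul_smul_comm, mul_one]
      _ = d (Sinv (R.r i) ⊗ₜ[k] S (R.l i)) := by
          have hcol := congrArg (fun x => d (Sinv (R.r i) ⊗ₜ[k] S x))
            (RT i).sum_counit_smul_right
          simp only [map_sum, map_smul, tmul_sum, tmul_smul] at hcol
          exact hcol
  -- Elem2
  have elem2 : (∑ i, ∑ j, ∑ l,
      p (S ((RT i).l j) ⊗ₜ[k] Sinv ((RA i).r l)) * (Sinv ((RA i).l l) * (RT i).r j)) =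
      TOp k H p Sinv h := by
    set g2 : H ⊗[k] H →ₗ[k] H :=
      LinearMap.mul' k H ∘ₗ TensorProduct.map Sinv LinearMap.id ∘ₗ
        (TensorProduct.comm k H H).toLinearMap with hg2
    have hg2app : ∀ x y : H, g2 (x ⊗ₜ[k] y) = Sinv y * x := by
      intro x y; simp [hg2]
    set f2 : H ⊗[k] H →ₗ[k] H := p ∘ₗ TensorProduct.map S Sinv with hf2
    set F2 : (H ⊗[k] H) ⊗[k] (H ⊗[k] H) →ₗ[k] H :=
      LinearMap.mul' k H ∘ₗ TensorProduct.map f2 g2 ∘ₗ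
        (tensorTensorTensorComm k H H H H).toLinearMap ∘ₗ
        LinearMap.lTensor (H ⊗[k] H) (TensorProduct.comm k H H).toLinearMap with hF2
    have hF2app : ∀ b ω a1 a2 : H, F2 ((b ⊗ₜ[k] ω) ⊗ₜ[k] (a1 ⊗ₜ[k] a2)) =
        p (S b ⊗ₜ[k] Sinv a2) * (Sinv a1 * ω) := by
      intro b ω a1 a2
      simp [hF2, hf2, hg2app, tensorTensorTensorComm_tmul]
    set K2 : H ⊗[k] (H ⊗[k] H) →ₗ[k] H :=
      F2 ∘ₗ LinearMap.rTensor (H ⊗[k] H) (Coalgebra.comul (R := k)) with hK2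
    have hK2app : ∀ (x : H) (t : H ⊗[k] H),
        K2 (x ⊗ₜ[k] t) = F2 (Coalgebra.comul (R := k) x ⊗ₜ[k] t) := by
      intro x t; simp [hK2]
    rw [hTOp]
    calc (∑ i, ∑ j, ∑ l,
        p (S ((RT i).l j) ⊗ₜ[k] Sinv ((RA i).r l)) * (Sinv ((RA i).l l) * (RT i).r j))
        = ∑ i, ∑ l, K2 (R.l i ⊗ₜ[k] ((RA i).l l ⊗ₜ[k] (RA i).r l)) := by
          apply Finset.sum_congr rfl; intro i _
          rw [Finset.sum_comm]
          apply Finset.sum_congr rfl; intro l _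
          rw [hK2app, ← (RT i).eq, sum_tmul, map_sum]
          exact Finset.sum_congr rfl fun j _ => (hF2app _ _ _ _).symm
      _ = ∑ i, ∑ j, K2 ((RT i).l j ⊗ₜ[k] ((RT i).r j ⊗ₜ[k] R.r i)) := by
          have := congrArg K2 (tri_coassoc R RT RA)
          simpa [map_sum] using this.symm
      _ = ∑ i, p (S (R.l i) ⊗ₜ[k] Sinv (R.r i)) := by
          apply Finset.sum_congr rfl; intro i _
          set f2i : H →ₗ[k] H :=
            p ∘ₗ ((TensorProduct.mk k H H).flip (Sinv (R.r i))) ∘ₗ S with hf2i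
          set Phi2 : H ⊗[k] (H ⊗[k] H) →ₗ[k] H :=
            LinearMap.mul' k H ∘ₗ TensorProduct.map f2i g2 with hPhi2
          have hPhi2App : ∀ b1 b2 ω : H, Phi2 (b1 ⊗ₜ[k] (b2 ⊗ₜ[k] ω)) =
              p (S b1 ⊗ₜ[k] Sinv (R.r i)) * (Sinv ω * b2) := by
            intro b1 b2 ω; simp [hPhi2, hf2i, hg2app]
          calc (∑ j, K2 ((RT i).l j ⊗ₜ[k] ((RT i).r j ⊗ₜ[k] R.r i)))
              = ∑ j, ∑ l, Phi2 ((RB i j).l l ⊗ₜ[k] ((RB i j).r l ⊗ₜ[k] (RT i).r j)) := by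
                apply Finset.sum_congr rfl; intro j _
                rw [hK2app, ← (RB i j).eq, sum_tmul, map_sum]
                apply Finset.sum_congr rfl; intro l _
                rw [hF2app, hPhi2App]
            _ = ∑ j, ∑ l, Phi2 ((RT i).l j ⊗ₜ[k] ((RW i j).l l ⊗ₜ[k] (RW i j).r l)) := by
                have := congrArg Phi2 (tri_coassoc (RT i) (RB i) (RW i))
                simpa [map_sum] using this
            _ = ∑ j, Coalgebra.counit (R := k) ((RT i).r j) •
                  p (S ((RT i).l j) ⊗ₜ[k] Sinv (R.r i)) := by
                apply Finset.sum_congr rfl; intro j _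
                simp only [hPhi2App]
                rw [← Finset.mul_sum, SwRep.sum_sinv_mul hS1 hS2 (RW i j), mul_smul_comm,
                  mul_one]
            _ = p (S (R.l i) ⊗ₜ[k] Sinv (R.r i)) := by
                have hcol := congrArg (fun x => p (S x ⊗ₜ[k] Sinv (R.r i)))
                  (RT i).sum_counit_smul_right
                simp only [map_sum, map_smul, sum_tmul] at hcol
                simp only [← TensorProduct.smul_tmul', map_smul] at hcol
                exact hcol
  -- the key reduction, uniform in the outer operation q
  have keyq : ∀ (q : H ⊗[k] H →ₗ[k] H),
      (∀ c a b : H, q (c ⊗ₜ[k] (a * b)) = q (q (c ⊗ₜ[k] b) ⊗ₜ[k] a)) →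
      (∀ i j, (∑ l, q (q (q (kk ⊗ₜ[k] (RT i).r j) ⊗ₜ[k] S ((RB i j).r l)) ⊗ₜ[k]
            d (Sinv (R.r i) ⊗ₜ[k] S ((RB i j).l l)))) =
          ∑ l, q (q (q (kk ⊗ₜ[k] (RT i).r j) ⊗ₜ[k] Sinv ((RA i).l l)) ⊗ₜ[k]
            p (S ((RT i).l j) ⊗ₜ[k] Sinv ((RA i).r l)))) →
      q (kk ⊗ₜ[k] TOp' k H d Sinv h) = q (kk ⊗ₜ[k] TOp k H p Sinv h) := by
    intro q hq hcond
    have mod2 : ∀ w y z : H,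
        q (kk ⊗ₜ[k] (z * (y * w))) = q (q (q (kk ⊗ₜ[k] w) ⊗ₜ[k] y) ⊗ₜ[k] z) := by
      intro w y z; rw [hq, hq]
    calc q (kk ⊗ₜ[k] TOp' k H d Sinv h)
        = ∑ i, ∑ j, ∑ l, q (kk ⊗ₜ[k]
            (d (Sinv (R.r i) ⊗ₜ[k] S ((RB i j).l l)) * (S ((RB i j).r l) * (RT i).r j))) := by
          rw [← elem1]
          simp only [tmul_sum, map_sum]
      _ = ∑ i, ∑ j, ∑ l, q (q (q (kk ⊗ₜ[k] (RT i).r j) ⊗ₜ[k] S ((RB i j).r l)) ⊗ₜ[k]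
            d (Sinv (R.r i) ⊗ₜ[k] S ((RB i j).l l))) := by
          simp only [mod2]
      _ = ∑ i, ∑ j, ∑ l, q (q (q (kk ⊗ₜ[k] (RT i).r j) ⊗ₜ[k] Sinv ((RA i).l l)) ⊗ₜ[k]
            p (S ((RT i).l j) ⊗ₜ[k] Sinv ((RA i).r l))) := by
          exact Finset.sum_congr rfl fun i _ => Finset.sum_congr rfl fun j _ => hcond i j
      _ = ∑ i, ∑ j, ∑ l, q (kk ⊗ₜ[k]
            (p (S ((RT i).l j) ⊗ₜ[k] Sinv ((RA i).r l)) * (Sinv ((RA i).l l) * (RT i).r j))) := by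
          simp only [mod2]
      _ = q (kk ⊗ₜ[k] TOp k H p Sinv h) := by
          rw [← elem2]
          simp only [tmul_sum, map_sum]
  have hcond1 : ∀ i j, (∑ l, p (p (p (kk ⊗ₜ[k] (RT i).r j) ⊗ₜ[k] S ((RB i j).r l)) ⊗ₜ[k]
        d (Sinv (R.r i) ⊗ₜ[k] S ((RB i j).l l)))) =
      ∑ l, p (p (p (kk ⊗ₜ[k] (RT i).r j) ⊗ₜ[k] Sinv ((RA i).l l)) ⊗ₜ[k]
        p (S ((RT i).l j) ⊗ₜ[k] Sinv ((RA i).r l))) := by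
    intro i j
    exact (qc (p (kk ⊗ₜ[k] (RT i).r j)) (S ((RT i).l j)) (Sinv (R.r i)) _ _
      (fun l => S ((RB i j).r l)) (fun l => S ((RB i j).l l))
      (fun l => Sinv ((RA i).r l)) (fun l => Sinv ((RA i).l l))
      (anti_eq (RB i j)) (sinv_eq hS1 hS2 (RA i))).1
  have hcond3 : ∀ i j, (∑ l, d (d (d (kk ⊗ₜ[k] (RT i).r j) ⊗ₜ[k] S ((RB i j).r l)) ⊗ₜ[k]
        d (Sinv (R.r i) ⊗ₜ[k] S ((RB i j).l l)))) =
      ∑ l, d (d (d (kk ⊗ₜ[k] (RT i).r j) ⊗ₜ[k] Sinv ((RA i).l l)) ⊗ₜ[k]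
        p (S ((RT i).l j) ⊗ₜ[k] Sinv ((RA i).r l))) := by
    intro i j
    exact (qc (d (kk ⊗ₜ[k] (RT i).r j)) (S ((RT i).l j)) (Sinv (R.r i)) _ _
      (fun l => S ((RB i j).r l)) (fun l => S ((RB i j).l l))
      (fun l => Sinv ((RA i).r l)) (fun l => Sinv ((RA i).l l))
      (anti_eq (RB i j)) (sinv_eq hS1 hS2 (RA i))).2.2
  exact ⟨(keyq p modp.2 hcond1).symm, keyq d modd.2 hcond3⟩


end
end

section
/- Let ℋ = (H; ·, ⊥) be a Hopf q-brace and s(h⊗k) = ^{h_(1)}k_(1) ⊗ h_(2)^{k_(2)} its associated braid-equation solution. Then (H,s) is a braiding operator, i.e., μ∘s = μ where μ is multiplication, if and only if ℋ is a Hopf skew-brace, i.e., (k⊥h_(2))h_(1) = (h·k_(1))k_(2) for all h,k ∈ H. -/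
open TensorProduct

noncomputable section

variable (k : Type) [Field k] (X : Type) [AddCommGroup X] [Module k X] [Coalgebra k X]

variable (H : Type) [Ring H] [HopfAlgebra k H]

-- chunk 1 : basic tools (to be inserted before stmt_16)
private theorem sweedler (x : H) : ∃ (n : ℕ) (a b : Fin n → H),
    (∑ i, a i ⊗ₜ[k] b i) = Coalgebra.comul (R := k) x := by
  have h : ∀ t : H ⊗[k] H, ∃ (n : ℕ) (a b : Fin n → H), (∑ i, a i ⊗ₜ[k] b i) = t := by
    intro t
    induction t with
    | zero => exact ⟨0, ![], ![], by simp⟩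
    | tmul u v => exact ⟨1, fun _ => u, fun _ => v, by simp⟩
    | add s t hs ht =>
        obtain ⟨n, a, b, hab⟩ := hs; obtain ⟨m, c, e, hce⟩ := ht
        refine ⟨n + m, Fin.append a c, Fin.append b e, ?_⟩
        rw [Fin.sum_univ_add]
        simp [Fin.append_left, Fin.append_right, hab, hce]
  exact h _

private theorem counit_left {x : H} {n : ℕ} {a b : Fin n → H}
    (h : (∑ i, a i ⊗ₜ[k] b i) = Coalgebra.comul (R := k) x) :
    ∑ i, Coalgebra.counit (R := k) (a i) • b i = x := by
  have h2 := congrArg (fun z => (TensorProduct.lid k H) (LinearMap.rTensor H (Coalgebra.counit (R := k)) z)) h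
  simpa [map_sum] using h2

private theorem counit_right {x : H} {n : ℕ} {a b : Fin n → H}
    (h : (∑ i, a i ⊗ₜ[k] b i) = Coalgebra.comul (R := k) x) :
    ∑ i, Coalgebra.counit (R := k) (b i) • a i = x := by
  have h2 := congrArg (fun z => (TensorProduct.rid k H) (LinearMap.lTensor H (Coalgebra.counit (R := k)) z)) h
  simpa [map_sum] using h2

private theorem Gmap_tmul (f : H ⊗[k] H →ₗ[k] H) (x y : H) {n : ℕ} {c e : Fin n → H}
    (h : (∑ j, c j ⊗ₜ[k] e j) = Coalgebra.comul (R := k) y) :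
    Gmap k H f (x ⊗ₜ[k] y) = ∑ j, f (x ⊗ₜ[k] c j) ⊗ₜ[k] e j := by
  unfold Gmap
  rw [LinearMap.comp_apply, LinearMap.comp_apply, LinearMap.lTensor_tmul, ← h,
    TensorProduct.tmul_sum, map_sum, map_sum]
  simp

private theorem scheme3 {M : Type} [AddCommGroup M] [Module k M]
    (φ : H →ₗ[k] H →ₗ[k] H →ₗ[k] M) {x : H}
    {n₁ : ℕ} {u w : Fin n₁ → H} (hk1 : (∑ i, u i ⊗ₜ[k] w i) = Coalgebra.comul (R := k) x)
    {m₁ : Fin n₁ → ℕ} {u1 u2 : ∀ i, Fin (m₁ i) → H}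
    (hu : ∀ i, (∑ j, u1 i j ⊗ₜ[k] u2 i j) = Coalgebra.comul (R := k) (u i))
    {n₂ : ℕ} {x' t : Fin n₂ → H} (hk2 : (∑ i, x' i ⊗ₜ[k] t i) = Coalgebra.comul (R := k) x)
    {m₂ : Fin n₂ → ℕ} {t1 t2 : ∀ i, Fin (m₂ i) → H}
    (ht : ∀ i, (∑ j, t1 i j ⊗ₜ[k] t2 i j) = Coalgebra.comul (R := k) (t i)) :
    (∑ i, ∑ j, φ (u1 i j) (u2 i j) (w i)) = ∑ i, ∑ j, φ (x' i) (t1 i j) (t2 i j) := by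
  set Ψ : (H ⊗[k] H) ⊗[k] H →ₗ[k] M := TensorProduct.lift (TensorProduct.lift φ) with hΨ
  set Ψ' : H ⊗[k] (H ⊗[k] H) →ₗ[k] M :=
    TensorProduct.lift ((TensorProduct.lift.equiv (RingHom.id k) H H M).toLinearMap ∘ₗ φ) with hΨ'
  have key : ∀ z : (H ⊗[k] H) ⊗[k] H, Ψ' (TensorProduct.assoc k H H H z) = Ψ z := by
    have : Ψ' ∘ₗ (TensorProduct.assoc k H H H).toLinearMap = Ψ := by
      apply TensorProduct.ext_threefold
      intro a b c
      simp [hΨ, hΨ']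
    intro z
    exact congr($this z)
  have hL : (∑ i, ∑ j, φ (u1 i j) (u2 i j) (w i))
      = Ψ ((Coalgebra.comul (R := k)).rTensor H (Coalgebra.comul (R := k) x)) := by
    simp only [← hk1, map_sum]
    refine Finset.sum_congr rfl fun i _ => ?_
    rw [LinearMap.rTensor_tmul, ← hu i]
    simp only [TensorProduct.sum_tmul, map_sum]
    simp [hΨ]
  have hR : (∑ i, ∑ j, φ (x' i) (t1 i j) (t2 i j))
      = Ψ' ((Coalgebra.comul (R := k)).lTensor H (Coalgebra.comul (R := k) x)) := by
    simp only [← hk2, map_sum]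
    refine Finset.sum_congr rfl fun i _ => ?_
    rw [LinearMap.lTensor_tmul, ← ht i]
    simp only [TensorProduct.tmul_sum, map_sum]
    simp [hΨ']
  rw [hL, hR, ← Coalgebra.coassoc_apply, key]

private theorem cE_tmul (x y : H) :
    cE k H (x ⊗ₜ[k] y) = Coalgebra.counit (R := k) y • x := by
  simp [cE]

private theorem gp_collapse {p g : H ⊗[k] H →ₗ[k] H} (hg2 : g ∘ₗ Gmap k H p = cE k H)
    (x m : H) {n : ℕ} {c e : Fin n → H}
    (h : (∑ j, c j ⊗ₜ[k] e j) = Coalgebra.comul (R := k) m) :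
    (∑ j, g (p (x ⊗ₜ[k] c j) ⊗ₜ[k] e j)) = Coalgebra.counit (R := k) m • x := by
  have h1 := Gmap_tmul k H p x m h
  calc (∑ j, g (p (x ⊗ₜ[k] c j) ⊗ₜ[k] e j)) = g (Gmap k H p (x ⊗ₜ[k] m)) := by
        rw [h1, map_sum]
    _ = cE k H (x ⊗ₜ[k] m) := congr($(hg2) _)
    _ = Coalgebra.counit (R := k) m • x := cE_tmul k H x m

private theorem comulT_apply (x y : H) :
    comulT k H (x ⊗ₜ[k] y) = (TensorProduct.tensorTensorTensorComm k H H H H).toLinearMap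
      (Coalgebra.comul (R := k) x ⊗ₜ[k] Coalgebra.comul (R := k) y) := by
  rw [comulT, LinearMap.comp_apply, TensorProduct.map_tmul]

private theorem comul_p {p : H ⊗[k] H →ₗ[k] H} (hp : IsCoalgMorCop k H p) (x y : H)
    {n m : ℕ} {a b : Fin n → H} {c e : Fin m → H}
    (hx : (∑ i, a i ⊗ₜ[k] b i) = Coalgebra.comul (R := k) x)
    (hy : (∑ j, c j ⊗ₜ[k] e j) = Coalgebra.comul (R := k) y) :
    Coalgebra.comul (R := k) (p (x ⊗ₜ[k] y))
      = ∑ i, ∑ j, p (a i ⊗ₜ[k] e j) ⊗ₜ[k] p (b i ⊗ₜ[k] c j) := by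
  have h0 := congr($(hp.1) (x ⊗ₜ[k] y))
  rw [LinearMap.comp_apply] at h0
  rw [h0, LinearMap.comp_apply]
  unfold comulTCop comulCop
  rw [LinearMap.comp_apply, TensorProduct.map_tmul, LinearMap.comp_apply, ← hx, ← hy]
  simp only [map_sum, TensorProduct.comm_tmul, TensorProduct.sum_tmul, TensorProduct.tmul_sum,
    TensorProduct.tensorTensorTensorComm_tmul, TensorProduct.map_tmul]
  exact Finset.sum_comm

private theorem bOf_Gp {p d g : H ⊗[k] H →ₗ[k] H} (hg2 : g ∘ₗ Gmap k H p = cE k H)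
    (x kk : H) : bOf k H g d (Gmap k H p (x ⊗ₜ[k] kk)) = d (kk ⊗ₜ[k] x) := by
  classical
  obtain ⟨n, u, w, hk⟩ := sweedler k H kk
  choose mw w1 w2 hw using fun i => sweedler k H (w i)
  choose mu u1 u2 hu using fun i => sweedler k H (u i)
  -- expand bOf (Gmap p _) into scheme sums
  have e1 : bOf k H g d (Gmap k H p (x ⊗ₜ[k] kk))
      = ∑ i, ∑ j, d (w2 i j ⊗ₜ[k] g (p (x ⊗ₜ[k] u i) ⊗ₜ[k] w1 i j)) := by
    rw [Gmap_tmul k H p x kk hk, map_sum]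
    refine Finset.sum_congr rfl fun i _ => ?_
    unfold bOf
    rw [LinearMap.comp_apply, LinearMap.comp_apply,
      Gmap_tmul k H g (p (x ⊗ₜ[k] u i)) (w i) (hw i), map_sum, map_sum]
    simp
  rw [e1]
  -- the trilinear map  c1 c2 c3 ↦ d (c3 ⊗ g (p (x ⊗ c1) ⊗ c2))
  set φ : H →ₗ[k] H →ₗ[k] H →ₗ[k] H :=
    LinearMap.compr₂ ((TensorProduct.curry g) ∘ₗ p ∘ₗ TensorProduct.mk k H H x)
      ((TensorProduct.curry d).flip) with hφ
  have hφa : ∀ c1 c2 c3, φ c1 c2 c3 = d (c3 ⊗ₜ[k] g (p (x ⊗ₜ[k] c1) ⊗ₜ[k] c2)) := by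
    intro c1 c2 c3
    simp [hφ]
  have := scheme3 k H φ hk hu hk hw
  simp only [hφa] at this
  rw [← this]
  calc (∑ i, ∑ j, d (w i ⊗ₜ[k] g (p (x ⊗ₜ[k] u1 i j) ⊗ₜ[k] u2 i j)))
      = ∑ i, d (w i ⊗ₜ[k] (Coalgebra.counit (R := k) (u i) • x)) := by
        refine Finset.sum_congr rfl fun i _ => ?_
        rw [← gp_collapse k H hg2 x (u i) (hu i), TensorProduct.tmul_sum, map_sum]
    _ = ∑ i, Coalgebra.counit (R := k) (u i) • d (w i ⊗ₜ[k] x) := by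
        refine Finset.sum_congr rfl fun i _ => ?_
        rw [TensorProduct.tmul_smul, map_smul]
    _ = d ((∑ i, Coalgebra.counit (R := k) (u i) • w i) ⊗ₜ[k] x) := by
        rw [TensorProduct.sum_tmul, map_sum]
        simp only [← TensorProduct.smul_tmul', map_smul]
    _ = d (kk ⊗ₜ[k] x) := by rw [counit_left k H hk]

private theorem main_calc {p d g : H ⊗[k] H →ₗ[k] H}
    (hp : IsCoalgMorCop k H p) (hex : ExchangeId k H p d)
    (hg2 : g ∘ₗ Gmap k H p = cE k H) (x kk : H)
    {nh : ℕ} {a b : Fin nh → H}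
    (hx : (∑ i, a i ⊗ₜ[k] b i) = Coalgebra.comul (R := k) x) :
    LinearMap.mul' k H (TensorProduct.map (bOf k H g d) g
        (comulT k H (Gmap k H p (x ⊗ₜ[k] kk))))
      = ∑ i, d (kk ⊗ₜ[k] b i) * a i := by
  classical
  obtain ⟨n, u, w, hk⟩ := sweedler k H kk
  choose mu u1 u2 hu using fun α => sweedler k H (u α)
  choose mw w1 w2 hw using fun α => sweedler k H (w α)
  choose mv v1 v2 hv using fun α γ => sweedler k H (w2 α γ)
  choose mm m1 m2 hm using fun α γ => sweedler k H (w1 α γ)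
  -- the trilinear map (c1,c2,c3) ↦ ∑ i, bOf (p (a i ⊗ c2) ⊗ Δc3-left) * g (p (b i ⊗ c1) ⊗ Δc3-right)
  set φA : H →ₗ[k] H →ₗ[k] H →ₗ[k] H := ∑ i, LinearMap.flip (LinearMap.compl₂
      ((LinearMap.compr₂ (TensorProduct.mapBilinear (RingHom.id k) H H H H)
          ((LinearMap.llcomp k H (H ⊗[k] H) H (LinearMap.mul' k H)) ∘ₗ
            (LinearMap.lcomp k (H ⊗[k] H) (Coalgebra.comul (R := k))))) ∘ₗ
        ((TensorProduct.curry (bOf k H g d)) ∘ₗ p ∘ₗ TensorProduct.mk k H H (a i)))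
      ((TensorProduct.curry g) ∘ₗ p ∘ₗ TensorProduct.mk k H H (b i))) with hφA
  have hφAa : ∀ c1 c2 c3, φA c1 c2 c3 = ∑ i, LinearMap.mul' k H
      (TensorProduct.map ((TensorProduct.curry (bOf k H g d)) (p (a i ⊗ₜ[k] c2)))
        ((TensorProduct.curry g) (p (b i ⊗ₜ[k] c1))) (Coalgebra.comul (R := k) c3)) := by
    intro c1 c2 c3
    simp [hφA, LinearMap.compl₂_apply, LinearMap.compr₂_apply,
      TensorProduct.mapBilinear_apply, LinearMap.llcomp_apply, LinearMap.lcomp_apply]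
  have hφAe : ∀ α β, φA (u1 α β) (u2 α β) (w α)
      = ∑ i, ∑ γ, bOf k H g d (p (a i ⊗ₜ[k] u2 α β) ⊗ₜ[k] w1 α γ)
          * g (p (b i ⊗ₜ[k] u1 α β) ⊗ₜ[k] w2 α γ) := by
    intro α β
    rw [hφAa]
    refine Finset.sum_congr rfl fun i _ => ?_
    rw [← hw α, map_sum, map_sum]
    simp [TensorProduct.curry_apply, LinearMap.mul'_apply]
  have hφAe' : ∀ α γ, φA (u α) (w1 α γ) (w2 α γ)
      = ∑ i, ∑ δ, bOf k H g d (p (a i ⊗ₜ[k] w1 α γ) ⊗ₜ[k] v1 α γ δ)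
          * g (p (b i ⊗ₜ[k] u α) ⊗ₜ[k] v2 α γ δ) := by
    intro α γ
    rw [hφAa]
    refine Finset.sum_congr rfl fun i _ => ?_
    rw [← hv α γ, map_sum, map_sum]
    simp [TensorProduct.curry_apply, LinearMap.mul'_apply]
  -- step 1 : expand everything
  have e1 : LinearMap.mul' k H (TensorProduct.map (bOf k H g d) g
        (comulT k H (Gmap k H p (x ⊗ₜ[k] kk))))
      = ∑ α, ∑ β, φA (u1 α β) (u2 α β) (w α) := by
    rw [Gmap_tmul k H p x kk hk]
    simp only [map_sum]
    refine Finset.sum_congr rfl fun α _ => ?_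
    rw [comulT_apply, comul_p k H hp x (u α) hx (hu α), ← hw α]
    simp only [TensorProduct.sum_tmul, TensorProduct.tmul_sum, map_sum]
    simp only [LinearEquiv.coe_coe, TensorProduct.tensorTensorTensorComm_tmul,
      TensorProduct.map_tmul, LinearMap.mul'_apply]
    simp only [hφAe]
    exact Finset.sum_comm.trans
      ((Finset.sum_congr rfl fun i _ => Finset.sum_comm).trans Finset.sum_comm)
  rw [e1, scheme3 k H φA hk hu hk hw]
  -- step 2 : collapse the innermost pair using bOf_Gp, after re-association inside w α
  have e2 : ∀ α, (∑ γ, φA (u α) (w1 α γ) (w2 α γ))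
      = ∑ γ, ∑ i, d (w1 α γ ⊗ₜ[k] a i) * g (p (b i ⊗ₜ[k] u α) ⊗ₜ[k] w2 α γ) := by
    intro α
    set φ4 : H →ₗ[k] H →ₗ[k] H →ₗ[k] H := ∑ i, LinearMap.compr₂
        ((TensorProduct.curry (bOf k H g d)) ∘ₗ p ∘ₗ TensorProduct.mk k H H (a i))
        ((LinearMap.lcomp k H (g ∘ₗ TensorProduct.mk k H H (p (b i ⊗ₜ[k] u α)))) ∘ₗ
          (LinearMap.mul k H)) with hφ4
    have hφ4a : ∀ c1 c2 c3, φ4 c1 c2 c3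
        = ∑ i, bOf k H g d (p (a i ⊗ₜ[k] c1) ⊗ₜ[k] c2) * g (p (b i ⊗ₜ[k] u α) ⊗ₜ[k] c3) := by
      intro c1 c2 c3
      simp [hφ4, LinearMap.compr₂_apply, LinearMap.lcomp_apply, LinearMap.mul_apply_apply]
    calc (∑ γ, φA (u α) (w1 α γ) (w2 α γ))
        = ∑ γ, ∑ δ, φ4 (w1 α γ) (v1 α γ δ) (v2 α γ δ) := by
          refine Finset.sum_congr rfl fun γ _ => ?_
          rw [hφAe' α γ]
          simp only [hφ4a]
          exact Finset.sum_comm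
      _ = ∑ γ, ∑ δ, φ4 (m1 α γ δ) (m2 α γ δ) (w2 α γ) :=
          (scheme3 k H φ4 (hw α) (hm α) (hw α) (hv α)).symm
      _ = ∑ γ, ∑ i, d (w1 α γ ⊗ₜ[k] a i) * g (p (b i ⊗ₜ[k] u α) ⊗ₜ[k] w2 α γ) := by
          refine Finset.sum_congr rfl fun γ _ => ?_
          simp only [hφ4a]
          refine Finset.sum_comm.trans (Finset.sum_congr rfl fun i _ => ?_)
          rw [← Finset.sum_mul]
          congr 1
          rw [← bOf_Gp k H hg2 (a i) (w1 α γ),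
            Gmap_tmul k H p (a i) (w1 α γ) (hm α γ), map_sum]
  rw [Finset.sum_congr rfl fun α _ => e2 α]
  -- step 3 : exchange
  set φ6 : H →ₗ[k] H →ₗ[k] H →ₗ[k] H := ∑ i, LinearMap.flip (LinearMap.compl₂
      ((LinearMap.llcomp k H H H) ∘ₗ ((LinearMap.mul k H) ∘ₗ
        ((TensorProduct.curry d).flip (a i))))
      ((TensorProduct.curry g) ∘ₗ p ∘ₗ TensorProduct.mk k H H (b i))) with hφ6
  have hφ6a : ∀ c1 c2 c3, φ6 c1 c2 c3
      = ∑ i, d (c2 ⊗ₜ[k] a i) * g (p (b i ⊗ₜ[k] c1) ⊗ₜ[k] c3) := by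
    intro c1 c2 c3
    simp [hφ6, LinearMap.compl₂_apply, LinearMap.llcomp_apply, LinearMap.mul_apply_apply]
  set φ8 : H →ₗ[k] H →ₗ[k] H →ₗ[k] H := ∑ i, LinearMap.compl₂
      ((LinearMap.llcomp k H H H) ∘ₗ ((LinearMap.mul k H) ∘ₗ
        ((TensorProduct.curry d).flip (b i))))
      ((TensorProduct.curry g) ∘ₗ p ∘ₗ TensorProduct.mk k H H (a i)) with hφ8
  have hφ8a : ∀ c1 c2 c3, φ8 c1 c2 c3
      = ∑ i, d (c1 ⊗ₜ[k] b i) * g (p (a i ⊗ₜ[k] c2) ⊗ₜ[k] c3) := by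
    intro c1 c2 c3
    simp [hφ8, LinearMap.compl₂_apply, LinearMap.llcomp_apply, LinearMap.mul_apply_apply]
  calc (∑ α, ∑ γ, ∑ i, d (w1 α γ ⊗ₜ[k] a i) * g (p (b i ⊗ₜ[k] u α) ⊗ₜ[k] w2 α γ))
      = ∑ α, ∑ γ, φ6 (u α) (w1 α γ) (w2 α γ) := by
        refine Finset.sum_congr rfl fun α _ => Finset.sum_congr rfl fun γ _ => ?_
        rw [hφ6a]
    _ = ∑ α, ∑ β, φ6 (u1 α β) (u2 α β) (w α) :=
        (scheme3 k H φ6 hk hu hk hw).symm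
    _ = ∑ α, ∑ β, φ8 (u1 α β) (u2 α β) (w α) := by
        refine Finset.sum_congr rfl fun α _ => ?_
        have hexα := hex x (u α) nh (mu α) a b (u1 α) (u2 α) hx (hu α)
        have happ := congrArg (fun z => LinearMap.mul' k H
          (TensorProduct.map LinearMap.id
            (g ∘ₗ (TensorProduct.mk k H H).flip (w α)) z)) hexα
        simp only [map_sum, TensorProduct.map_tmul, LinearMap.id_coe, id_eq,
          LinearMap.comp_apply, LinearMap.flip_apply, TensorProduct.mk_apply,
          LinearMap.mul'_apply] at happ
        calc (∑ β, φ6 (u1 α β) (u2 α β) (w α))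
            = ∑ β, ∑ i, d (u2 α β ⊗ₜ[k] a i) * g (p (b i ⊗ₜ[k] u1 α β) ⊗ₜ[k] w α) := by
              refine Finset.sum_congr rfl fun β _ => ?_
              rw [hφ6a]
          _ = ∑ i, ∑ β, d (u2 α β ⊗ₜ[k] a i) * g (p (b i ⊗ₜ[k] u1 α β) ⊗ₜ[k] w α) :=
              Finset.sum_comm
          _ = ∑ i, ∑ β, d (u1 α β ⊗ₜ[k] b i) * g (p (a i ⊗ₜ[k] u2 α β) ⊗ₜ[k] w α) :=
              happ.symm
          _ = ∑ β, ∑ i, d (u1 α β ⊗ₜ[k] b i) * g (p (a i ⊗ₜ[k] u2 α β) ⊗ₜ[k] w α) :=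
              Finset.sum_comm
          _ = ∑ β, φ8 (u1 α β) (u2 α β) (w α) := by
              refine Finset.sum_congr rfl fun β _ => ?_
              rw [hφ8a]
    _ = ∑ α, ∑ γ, φ8 (u α) (w1 α γ) (w2 α γ) :=
        scheme3 k H φ8 hk hu hk hw
    _ = ∑ i, d (kk ⊗ₜ[k] b i) * a i := by
        calc (∑ α, ∑ γ, φ8 (u α) (w1 α γ) (w2 α γ))
            = ∑ α, ∑ i, Coalgebra.counit (R := k) (w α) • (d (u α ⊗ₜ[k] b i) * a i) := by
              refine Finset.sum_congr rfl fun α _ => ?_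
              simp only [hφ8a]
              refine Finset.sum_comm.trans (Finset.sum_congr rfl fun i _ => ?_)
              rw [← Finset.mul_sum, gp_collapse k H hg2 (a i) (w α) (hw α),
                mul_smul_comm]
          _ = ∑ i, ∑ α, Coalgebra.counit (R := k) (w α) • (d (u α ⊗ₜ[k] b i) * a i) :=
              Finset.sum_comm
          _ = ∑ i, d (kk ⊗ₜ[k] b i) * a i := by
              refine Finset.sum_congr rfl fun i _ => ?_
              calc (∑ α, Coalgebra.counit (R := k) (w α) • (d (u α ⊗ₜ[k] b i) * a i))
                  = (∑ α, Coalgebra.counit (R := k) (w α) • d (u α ⊗ₜ[k] b i)) * a i := by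
                    rw [Finset.sum_mul]
                    exact Finset.sum_congr rfl fun α _ => (smul_mul_assoc _ _ _).symm
                _ = d ((∑ α, Coalgebra.counit (R := k) (w α) • u α) ⊗ₜ[k] b i) * a i := by
                    rw [TensorProduct.sum_tmul, map_sum]
                    simp only [← TensorProduct.smul_tmul', map_smul]
                _ = d (kk ⊗ₜ[k] b i) * a i := by rw [counit_right k H hk]

/-- with `g` the operation `x^y` (the `G`-inverse of `·`), `bOf g d` the
left action `ˣy := y₍₂₎ ⊥ x^(y₍₁₎)`, and `s (h⊗kk) = ʰ⁽¹⁾kk₍₁₎ ⊗ h₍₂₎^(kk₍₂₎)` the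
associated solution: `(H,s)` is a braiding operator, i.e. `μ ∘ s = μ`, iff `ℋ` is a
Hopf skew-brace, i.e. `(kk⊥h₍₂₎)h₍₁₎ = (h·kk₍₁₎)kk₍₂₎`. -/
theorem stmt_16 (p d g : H ⊗[k] H →ₗ[k] H) (hpd : IsHopfQBrace k H p d)
    (hg1 : p ∘ₗ Gmap k H g = cE k H) (hg2 : g ∘ₗ Gmap k H p = cE k H) :
    LinearMap.mul' k H ∘ₗ (TensorProduct.map (bOf k H g d) g ∘ₗ comulT k H) =
        LinearMap.mul' k H ↔
      SkewCond k H p d := by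
  obtain ⟨hp, hd, hex, hbij, hrest⟩ := hpd
  constructor
  · intro E h kkv nn mm h1 h2 k1 k2 hh hkk
    have hmc := main_calc k H hp hex hg2 h kkv hh
    have hE := congr($E (Gmap k H p (h ⊗ₜ[k] kkv)))
    rw [LinearMap.comp_apply, LinearMap.comp_apply] at hE
    have hr : LinearMap.mul' k H (Gmap k H p (h ⊗ₜ[k] kkv))
        = ∑ j, p (h ⊗ₜ[k] k1 j) * k2 j := by
      rw [Gmap_tmul k H p h kkv hkk, map_sum]
      simp [LinearMap.mul'_apply]
    calc (∑ i, d (kkv ⊗ₜ[k] h2 i) * h1 i)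
        = LinearMap.mul' k H (TensorProduct.map (bOf k H g d) g
            (comulT k H (Gmap k H p (h ⊗ₜ[k] kkv)))) := hmc.symm
      _ = LinearMap.mul' k H (Gmap k H p (h ⊗ₜ[k] kkv)) := hE
      _ = ∑ j, p (h ⊗ₜ[k] k1 j) * k2 j := hr
  · intro hs
    have key : (LinearMap.mul' k H ∘ₗ (TensorProduct.map (bOf k H g d) g ∘ₗ comulT k H)) ∘ₗ
        Gmap k H p = LinearMap.mul' k H ∘ₗ Gmap k H p := by
      apply TensorProduct.ext'
      intro h kkv
      obtain ⟨n1, a, b, hx⟩ := sweedler k H h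
      obtain ⟨n2, c, e, hkk⟩ := sweedler k H kkv
      have hmc := main_calc k H hp hex hg2 h kkv hx
      simp only [LinearMap.comp_apply]
      rw [hmc, hs h kkv n1 n2 a b c e hx hkk]
      rw [Gmap_tmul k H p h kkv hkk, map_sum]
      simp [LinearMap.mul'_apply]
    refine LinearMap.ext fun z => ?_
    obtain ⟨y, rfl⟩ := hbij.2 z
    exact congr($key y)

end
end
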